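/- arXiv:2509.24918 — 17 statements merged into one kernel-verified Lean document; each statement's English description precedes it below -/
import Mathlib

section
/- The equation 2^(x/2) = x has exactly two real solutions, namely x = 2 and x = 4. In other words, for a real number x, one has (2:ℝ)^(x/2) = x if and only if x = 2 or x = 4. -/
open Real

/-- The function `2^(x/2) - x` is strictly convex on ℝ. -/
lemma rpow_sub_id_strictConvex :
    StrictConvexOn ℝ Set.univ (fun y : ℝ => (2:ℝ) ^ (y/2) - y) := by
  have h2 : (0:ℝ) < 2 := by norm_num
  have hl : Real.log 2 ≠ 0 := Real.log_ne_zero_of_pos_of_ne_one h2 (by norm_num)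
  refine ⟨convex_univ, ?_⟩
  intro a _ b _ hab s t hs ht hst
  have hne : Real.log 2 * (a/2) ≠ Real.log 2 * (b/2) := by
    intro h
    apply hab
    have := mul_left_cancel₀ hl h
    linarith
  have key := strictConvexOn_exp.2 (Set.mem_univ (Real.log 2 * (a/2)))
    (Set.mem_univ (Real.log 2 * (b/2))) hne hs ht hst
  simp only [smul_eq_mul] at key ⊢
  have e1 : s * (Real.log 2 * (a/2)) + t * (Real.log 2 * (b/2))
      = Real.log 2 * ((s * a + t * b)/2) := by ring
  rw [e1] at key
  simp only [Real.rpow_def_of_pos h2]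
  linarith

lemma combo {f : ℝ → ℝ} (hf : StrictConvexOn ℝ Set.univ f) {a b : ℝ} (hab : a ≠ b)
    {s t : ℝ} (hs : 0 < s) (ht : 0 < t) (hst : s + t = 1) :
    f (s * a + t * b) < s * f a + t * f b := by
  simpa using hf.2 (Set.mem_univ a) (Set.mem_univ b) hab hs ht hst

/-- The equation `2 ^ (x/2) = x` has exactly two real solutions: `x = 2` and `x = 4`. -/
theorem rpow_two_half_fixed_points (x : ℝ) :
    (2 : ℝ) ^ (x / 2) = x ↔ x = 2 ∨ x = 4 := by
  have h2 : ((2:ℝ)) ^ ((2:ℝ)/2) = 2 := by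
    norm_num
  have h4 : ((2:ℝ)) ^ ((4:ℝ)/2) = 4 := by
    rw [show (4:ℝ)/2 = ((2:ℕ):ℝ) by norm_num, Real.rpow_natCast]; norm_num
  constructor
  · intro h
    by_contra hc
    push_neg at hc
    obtain ⟨hx2, hx4⟩ := hc
    have hsc := rpow_sub_id_strictConvex
    rcases lt_trichotomy x 2 with h1 | h1 | h1
    · -- x < 2 < 4 : apply at middle point 2
      have hd : (0:ℝ) < 4 - x := by linarith
      have key := combo hsc (a := x) (b := 4) (by linarith : x ≠ 4)
        (s := 2/(4-x)) (t := (2-x)/(4-x))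
        (div_pos (by norm_num) hd) (div_pos (by linarith) hd)
        (by field_simp; ring)
      have hcomb : 2/(4-x) * x + (2-x)/(4-x) * 4 = 2 := by field_simp; ring
      rw [hcomb] at key
      rw [h2, h4, h] at key
      simp at key
    · exact hx2 h1
    · rcases lt_trichotomy x 4 with h3 | h3 | h3
      · -- 2 < x < 4 : middle point x
        have hd : (0:ℝ) < 4 - 2 := by norm_num
        have key := combo hsc (a := (2:ℝ)) (b := 4) (by norm_num : (2:ℝ) ≠ 4)
          (s := (4-x)/2) (t := (x-2)/2)
          (div_pos (by linarith) (by norm_num)) (div_pos (by linarith) (by norm_num))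
          (by ring)
        have hcomb : (4-x)/2 * 2 + (x-2)/2 * 4 = x := by ring
        rw [hcomb] at key
        rw [h2, h4, h] at key
        simp at key
      · exact hx4 h3
      · -- 2 < 4 < x : middle point 4
        have hd : (0:ℝ) < x - 2 := by linarith
        have key := combo hsc (a := (2:ℝ)) (b := x) (by linarith : (2:ℝ) ≠ x)
          (s := (x-4)/(x-2)) (t := 2/(x-2))
          (div_pos (by linarith) hd) (div_pos (by norm_num) hd)
          (by field_simp; ring)
        have hcomb : (x-4)/(x-2) * 2 + 2/(x-2) * x = 4 := by field_simp; ring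
        rw [hcomb] at key
        rw [h2, h4, h] at key
        simp at key
    -- end
  · rintro (rfl | rfl)
    · exact h2
    · exact h4
end

section
/- For every real x with x < 2 or x > 4 one has 2^(x/2) > x, and for every real x with 2 < x < 4 one has 2^(x/2) < x. -/
open Real

lemma aux_strictConvex : StrictConvexOn ℝ Set.univ (fun t : ℝ => (2 : ℝ) ^ (t / 2)) := by
  refine ⟨convex_univ, ?_⟩
  intro p _ q _ hpq a b ha hb hab
  have hlog : Real.log 2 ≠ 0 := by
    have := Real.log_pos (by norm_num : (1:ℝ) < 2); linarith
  have hrw : ∀ t : ℝ, (2 : ℝ) ^ (t / 2) = Real.exp (Real.log 2 * (t / 2)) := by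
    intro t; rw [Real.rpow_def_of_pos (by norm_num)]
  simp only [smul_eq_mul, hrw]
  have hne : Real.log 2 * (p / 2) ≠ Real.log 2 * (q / 2) := by
    intro h
    apply hpq
    have := mul_left_cancel₀ hlog h
    linarith
  have := strictConvexOn_exp.2 (Set.mem_univ (Real.log 2 * (p / 2)))
    (Set.mem_univ (Real.log 2 * (q / 2))) hne ha hb hab
  simp only [smul_eq_mul] at this
  convert this using 2
  ring

lemma aux_f2 : (2 : ℝ) ^ ((2 : ℝ) / 2) = 2 := by norm_num
lemma aux_f4 : (2 : ℝ) ^ ((4 : ℝ) / 2) = 4 := by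
  rw [show (4 : ℝ) / 2 = (2 : ℕ) by norm_num, Real.rpow_natCast]; norm_num

/-- For `x < 2` or `x > 4` one has `2^(x/2) > x`, and for `2 < x < 4` one has `2^(x/2) < x`. -/
theorem rpow_two_half_vs_id (x : ℝ) :
    ((x < 2 ∨ 4 < x) → (2 : ℝ) ^ (x / 2) > x) ∧
    ((2 < x ∧ x < 4) → (2 : ℝ) ^ (x / 2) < x) := by
  constructor
  · rintro (hx | hx)
    · -- x < 2 : evaluate strict convexity at points x and 4, midpoint 2
      have ha : (0:ℝ) < 2 / (4 - x) := by
        apply div_pos <;> linarith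
      have hb : (0:ℝ) < (2 - x) / (4 - x) := by
        apply div_pos <;> linarith
      have h0 : (4 - x) ≠ 0 := by linarith
      have hab : 2 / (4 - x) + (2 - x) / (4 - x) = 1 := by
        field_simp
        ring
      have key := aux_strictConvex.2 (Set.mem_univ x) (Set.mem_univ 4)
        (by linarith : x ≠ 4) ha hb hab
      simp only [smul_eq_mul] at key
      have hc : (2 / (4 - x)) * x + ((2 - x) / (4 - x)) * 4 = 2 := by
        field_simp
        ring
      rw [hc, aux_f2, aux_f4] at key
      -- 2 < a * f x + b * 4
      nlinarith [key, ha, hb]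
    · -- x > 4 : points 2 and x, midpoint 4
      have ha : (0:ℝ) < (x - 4) / (x - 2) := by
        apply div_pos <;> linarith
      have hb : (0:ℝ) < 2 / (x - 2) := by
        apply div_pos <;> linarith
      have h0 : (x - 2) ≠ 0 := by linarith
      have hab : (x - 4) / (x - 2) + 2 / (x - 2) = 1 := by
        field_simp
        ring
      have key := aux_strictConvex.2 (Set.mem_univ 2) (Set.mem_univ x)
        (by linarith : (2:ℝ) ≠ x) ha hb hab
      simp only [smul_eq_mul] at key
      have hc : ((x - 4) / (x - 2)) * 2 + (2 / (x - 2)) * x = 4 := by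
        field_simp; ring
      rw [hc, aux_f2, aux_f4] at key
      nlinarith [key, ha, hb]
  · rintro ⟨h1, h2⟩
    have ha : (0:ℝ) < (4 - x) / 2 := by linarith
    have hb : (0:ℝ) < (x - 2) / 2 := by linarith
    have hab : (4 - x) / 2 + (x - 2) / 2 = 1 := by ring
    have key := aux_strictConvex.2 (Set.mem_univ 2) (Set.mem_univ 4)
      (by norm_num : (2:ℝ) ≠ 4) ha hb hab
    simp only [smul_eq_mul] at key
    have hc : ((4 - x) / 2) * 2 + ((x - 2) / 2) * 4 = x := by ring
    rw [hc, aux_f2, aux_f4] at key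
    linarith
end

section
/- For every real x₀ < 4, the sequence of iterates x_k = f^[k](x₀) of the function f(x) = 2^(x/2) converges to 2 as k → ∞. -/
open Real Filter Set

noncomputable def Fm : ℝ → ℝ := fun x => (2 : ℝ) ^ (x / 2)

lemma Fm_eq (x : ℝ) : Fm x = Real.exp (Real.log 2 * (x / 2)) := by
  simp [Fm, Real.rpow_def_of_pos (by norm_num : (0:ℝ) < 2)]

lemma Fm_two : Fm 2 = 2 := by
  norm_num [Fm]

lemma Fm_four : Fm 4 = 4 := by
  have : ((4:ℝ)/2) = (2:ℕ) := by norm_num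
  rw [Fm, this, Real.rpow_natCast]; norm_num

lemma Fm_strictMono : StrictMono Fm := by
  intro a b hab
  rw [Fm, Fm]
  exact Real.rpow_lt_rpow_left_iff (by norm_num) |>.2 (by linarith)

lemma Fm_cont : Continuous Fm := by
  have : Fm = fun x => Real.exp (Real.log 2 * (x / 2)) := funext Fm_eq
  rw [this]; continuity

lemma Fm_convex {a b t s : ℝ} (hab : a ≠ b) (ht : 0 < t) (hs : 0 < s)
    (hts : t + s = 1) : Fm (t * a + s * b) < t * Fm a + s * Fm b := by
  have h := strictConvexOn_exp.2 (Set.mem_univ (Real.log 2 * (a / 2)))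
    (Set.mem_univ (Real.log 2 * (b / 2)))
    (by
      have h2 : Real.log 2 ≠ 0 := ne_of_gt (Real.log_pos (by norm_num))
      intro h; apply hab
      have := mul_left_cancel₀ h2 h
      linarith) ht hs hts
  simp only [smul_eq_mul] at h
  rw [Fm_eq, Fm_eq, Fm_eq]
  calc Real.exp (Real.log 2 * ((t * a + s * b) / 2))
      = Real.exp (t * (Real.log 2 * (a / 2)) + s * (Real.log 2 * (b / 2))) := by ring_nf
    _ < _ := h

lemma key1 {x : ℝ} (hx : x < 2) : x < Fm x := by
  set t : ℝ := 2 / (4 - x) with ht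
  set s : ℝ := (2 - x) / (4 - x) with hs
  have h4 : (0:ℝ) < 4 - x := by linarith
  have htpos : 0 < t := div_pos (by norm_num) h4
  have hspos : 0 < s := div_pos (by linarith) h4
  have hts : t + s = 1 := by rw [ht, hs]; field_simp; ring
  have hcomb : t * x + s * 4 = 2 := by rw [ht, hs]; field_simp; ring
  have h := Fm_convex (a := x) (b := 4) (by linarith : x ≠ 4) htpos hspos hts
  rw [hcomb, Fm_two, Fm_four] at h
  -- 2 < t * Fm x + s * 4, and t*x + s*4 = 2
  nlinarith [h, hcomb]

lemma key2 {x : ℝ} (hx2 : 2 < x) (hx4 : x < 4) : Fm x < x := by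
  set t : ℝ := (4 - x) / 2 with ht
  set s : ℝ := (x - 2) / 2 with hs
  have htpos : 0 < t := by rw [ht]; exact div_pos (by linarith) two_pos
  have hspos : 0 < s := by rw [hs]; exact div_pos (by linarith) two_pos
  have hts : t + s = 1 := by rw [ht, hs]; ring
  have hcomb : t * 2 + s * 4 = x := by rw [ht, hs]; ring
  have h := Fm_convex (a := 2) (b := 4) (by norm_num : (2:ℝ) ≠ 4) htpos hspos hts
  rw [hcomb, Fm_two, Fm_four] at h
  linarith

/-- For every `x₀ < 4`, the iterates of `f(x) = 2^(x/2)` starting at `x₀` converge to `2`. -/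
theorem rpow_two_half_iterates_tendsto_two (x₀ : ℝ) (hx₀ : x₀ < 4) :
    Filter.Tendsto (fun k : ℕ => (fun x : ℝ => (2 : ℝ) ^ (x / 2))^[k] x₀)
      Filter.atTop (nhds 2) := by
  have hfun : (fun x : ℝ => (2 : ℝ) ^ (x / 2)) = Fm := rfl
  rw [hfun]
  set a : ℕ → ℝ := fun k => Fm^[k] x₀ with ha
  have hsucc : ∀ k, a (k + 1) = Fm (a k) := by
    intro k; rw [ha]; simp [Function.iterate_succ_apply']
  rcases le_or_gt x₀ 2 with hle | hgt
  · -- increasing case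
    have hbd : ∀ k, a k ≤ 2 := by
      intro k; induction k with
      | zero => simpa [ha] using hle
      | succ n ih =>
        rw [hsucc]
        calc Fm (a n) ≤ Fm 2 := Fm_strictMono.monotone ih
          _ = 2 := Fm_two
    have hmono : Monotone a := by
      apply monotone_nat_of_le_succ
      intro k
      rw [hsucc]
      rcases lt_or_eq_of_le (hbd k) with h | h
      · exact (key1 h).le
      · rw [h, Fm_two]
    have hbdd : BddAbove (Set.range a) := ⟨2, by rintro _ ⟨k, rfl⟩; exact hbd k⟩
    have hL : Filter.Tendsto a Filter.atTop (nhds (⨆ k, a k)) :=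
      tendsto_atTop_ciSup hmono hbdd
    set L := ⨆ k, a k with hLdef
    have hL2 : L ≤ 2 := ciSup_le hbd
    have hfix : Fm L = L := by
      have h1 : Filter.Tendsto (fun k => a (k + 1)) Filter.atTop (nhds L) :=
        hL.comp (Filter.tendsto_add_atTop_nat 1)
      have h2 : Filter.Tendsto (fun k => Fm (a k)) Filter.atTop (nhds (Fm L)) :=
        (Fm_cont.tendsto L).comp hL
      have : (fun k => a (k + 1)) = fun k => Fm (a k) := funext hsucc
      rw [this] at h1
      exact tendsto_nhds_unique h2 h1
    have hLeq : L = 2 := by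
      rcases lt_or_eq_of_le hL2 with h | h
      · have hk := key1 h; rw [hfix] at hk; exact absurd hk (lt_irrefl L)
      · exact h
    rwa [hLeq] at hL
  · -- decreasing case
    have hbd4 : ∀ k, a k < 4 := by
      intro k; induction k with
      | zero => simpa [ha] using hx₀
      | succ n ih =>
        rw [hsucc]
        calc Fm (a n) < Fm 4 := Fm_strictMono ih
          _ = 4 := Fm_four
    have hbd2 : ∀ k, 2 < a k := by
      intro k; induction k with
      | zero => simpa [ha] using hgt
      | succ n ih =>
        rw [hsucc]
        calc (2:ℝ) = Fm 2 := Fm_two.symm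
          _ < Fm (a n) := Fm_strictMono ih
    have hanti : Antitone a := by
      apply antitone_nat_of_succ_le
      intro k
      rw [hsucc]
      exact (key2 (hbd2 k) (hbd4 k)).le
    have hbdd : BddBelow (Set.range a) := ⟨2, by rintro _ ⟨k, rfl⟩; exact (hbd2 k).le⟩
    have hL : Filter.Tendsto a Filter.atTop (nhds (⨅ k, a k)) :=
      tendsto_atTop_ciInf hanti hbdd
    set L := ⨅ k, a k with hLdef
    have hL2 : 2 ≤ L := le_ciInf fun k => (hbd2 k).le
    have hL4 : L < 4 := lt_of_le_of_lt (ciInf_le hbdd 0) (hbd4 0)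
    have hfix : Fm L = L := by
      have h1 : Filter.Tendsto (fun k => a (k + 1)) Filter.atTop (nhds L) :=
        hL.comp (Filter.tendsto_add_atTop_nat 1)
      have h2 : Filter.Tendsto (fun k => Fm (a k)) Filter.atTop (nhds (Fm L)) :=
        (Fm_cont.tendsto L).comp hL
      have : (fun k => a (k + 1)) = fun k => Fm (a k) := funext hsucc
      rw [this] at h1
      exact tendsto_nhds_unique h2 h1
    have hLeq : L = 2 := by
      rcases lt_or_eq_of_le hL2 with h | h
      · have hk := key2 h hL4; rw [hfix] at hk; exact absurd hk (lt_irrefl L)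
      · exact h.symm
    rwa [hLeq] at hL
end

section
/- For every real x₀ < 4 with x₀ ≠ 2, the Koenig limit L = lim_{k→∞} (f^[k](x₀) − 2) / (log 2)^k exists (as a finite real number) and is nonzero; moreover L < 0 when x₀ < 2 and L > 0 when 2 < x₀ < 4. Here f(x) = 2^(x/2). -/
open Real Filter

namespace KoenigAux

noncomputable def c : ℝ := Real.log 2
noncomputable def φ (u : ℝ) : ℝ := 2 * (Real.exp (c * u / 2) - 1)

lemma c_pos : 0 < c := Real.log_pos (by norm_num)
lemma c_lt_one : c < 1 := by
  have := Real.log_two_lt_d9; unfold c; linarith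

lemma phi_eq (x : ℝ) : (2:ℝ) ^ (x/2) - 2 = φ (x - 2) := by
  have h2 : (2:ℝ) ^ (x/2) = Real.exp (Real.log 2 * (x/2)) :=
    Real.rpow_def_of_pos (by norm_num) _
  have he : Real.exp (Real.log 2) = 2 := Real.exp_log (by norm_num)
  have h3 : Real.exp (Real.log 2 * (x/2)) = 2 * Real.exp (c * (x-2)/2) := by
    rw [show Real.log 2 * (x/2) = Real.log 2 + c * (x-2)/2 by unfold c; ring,
        Real.exp_add, he]
  unfold φ; rw [h2, h3]; ring

-- exp v - 1 ≤ v * exp v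
lemma exp_sub_one_le (v : ℝ) : Real.exp v - 1 ≤ v * Real.exp v := by
  have h1 : (-v) + 1 ≤ Real.exp (-v) := Real.add_one_le_exp _
  have h2 : 0 < Real.exp v := Real.exp_pos v
  have h3 : Real.exp (-v) * Real.exp v = 1 := by
    rw [← Real.exp_add]; simp
  nlinarith

lemma ratio_pos {v : ℝ} (hv : v ≠ 0) : 0 < (Real.exp v - 1) / v := by
  rcases lt_or_gt_of_ne hv with h | h
  · apply div_pos_of_neg_of_neg _ h
    simpa using Real.exp_lt_one_iff.mpr h
  · apply div_pos _ h
    have := Real.add_one_le_exp v; linarith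

lemma abs_log_ratio_le {v : ℝ} (hv : v ≠ 0) :
    |Real.log ((Real.exp v - 1) / v)| ≤ |v| := by
  have h1 : v + 1 ≤ Real.exp v := Real.add_one_le_exp v
  have h2 := exp_sub_one_le v
  have hep : 0 < Real.exp v := Real.exp_pos v
  rcases lt_or_gt_of_ne hv with h | h
  · -- v < 0 : exp v ≤ ratio ≤ 1
    have hr1 : (Real.exp v - 1) / v ≤ 1 := by
      rw [div_le_one_of_neg h]  -- maybe wrong name
      linarith
    have hr2 : Real.exp v ≤ (Real.exp v - 1) / v := by
      rw [le_div_iff_of_neg h]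
      nlinarith
    have hl1 : Real.log ((Real.exp v - 1) / v) ≤ 0 := Real.log_nonpos (le_of_lt (ratio_pos hv)) hr1
    have hl2 : v ≤ Real.log ((Real.exp v - 1) / v) := by
      calc v = Real.log (Real.exp v) := (Real.log_exp v).symm
        _ ≤ _ := Real.log_le_log hep hr2
    rw [abs_of_nonpos hl1, abs_of_neg h]; linarith
  · -- v > 0 : 1 ≤ ratio ≤ exp v
    have hr1 : 1 ≤ (Real.exp v - 1) / v := by
      rw [le_div_iff₀ h]; linarith
    have hr2 : (Real.exp v - 1) / v ≤ Real.exp v := by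
      rw [div_le_iff₀ h]; nlinarith
    have hl1 : 0 ≤ Real.log ((Real.exp v - 1) / v) := Real.log_nonneg hr1
    have hl2 : Real.log ((Real.exp v - 1) / v) ≤ v := by
      calc Real.log ((Real.exp v - 1) / v) ≤ Real.log (Real.exp v) :=
            Real.log_le_log (by linarith) hr2
        _ = v := Real.log_exp v
    rw [abs_of_nonneg hl1, abs_of_pos h]; linarith

end KoenigAux
namespace KoenigAux

-- sign / contraction facts about φ
lemma phi_neg {u : ℝ} (hu : u < 0) : φ u < 0 := by
  unfold φ
  have : Real.exp (c * u / 2) < 1 := by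
    rw [Real.exp_lt_one_iff]
    have := c_pos; nlinarith
  nlinarith

lemma phi_ge {u : ℝ} : c * u ≤ φ u := by
  unfold φ
  have := Real.add_one_le_exp (c * u / 2)
  linarith

lemma phi_pos {u : ℝ} (hu : 0 < u) : 0 < φ u := by
  have := phi_ge (u := u); have := c_pos; nlinarith

lemma phi_lt_self {u : ℝ} (h0 : 0 < u) (h2 : u < 2) : φ u < u := by
  have key : Real.exp (c * u / 2) < 1 + u / 2 := by
    have t0 : 0 < u / 2 := by linarith
    have t1 : u / 2 < 1 := by linarith
    have := strictConvexOn_exp.2 (Set.mem_univ (0:ℝ)) (Set.mem_univ c)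
      (ne_of_lt c_pos) (by linarith : (0:ℝ) < 1 - u/2) t0 (by ring)
    simp only [smul_eq_mul, mul_zero, zero_add, Real.exp_zero] at this
    have he : Real.exp c = 2 := Real.exp_log (by norm_num)
    rw [he] at this
    calc Real.exp (c * u / 2) = Real.exp (u / 2 * c) := by ring_nf
      _ < (1 - u/2) * 1 + u/2 * 2 := this
      _ = 1 + u / 2 := by ring
  unfold φ; linarith

lemma phi_contract {u : ℝ} (h0 : 0 < u) (h1 : u ≤ 1) :
    φ u ≤ (c * Real.sqrt 2) * u := by
  have hv0 : 0 ≤ c * u / 2 := div_nonneg (mul_nonneg c_pos.le h0.le) (by norm_num)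
  have h2 : Real.exp (c * u / 2) - 1 ≤ (c * u / 2) * Real.exp (c * u / 2) :=
    exp_sub_one_le _
  have h3 : Real.exp (c * u / 2) ≤ Real.sqrt 2 := by
    have : Real.exp (c * u / 2) ≤ Real.exp (c / 2) := by
      apply Real.exp_le_exp.mpr
      have := c_pos; nlinarith
    refine this.trans (le_of_eq ?_)
    rw [show c / 2 = Real.log 2 * (1/2) by unfold c; ring, Real.exp_mul,
      Real.exp_log (by norm_num), ← Real.sqrt_eq_rpow]
  have hs : 0 < Real.sqrt 2 := by positivity
  have := c_pos
  unfold φ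
  nlinarith

lemma q_lt_one : c * Real.sqrt 2 < 1 := by
  have h1 : Real.sqrt 2 < 1.415 := by
    rw [show (1.415:ℝ) = Real.sqrt (1.415^2) by rw [Real.sqrt_sq (by norm_num)]]
    apply Real.sqrt_lt_sqrt (by norm_num); norm_num
  have h2 : c < 0.6931471808 := Real.log_two_lt_d9
  have h3 : 0 < Real.sqrt 2 := by positivity
  have := c_pos
  nlinarith

end KoenigAux
namespace KoenigAux

/-- Central lemma: geometric decay + recursion gives the Koenig limit. -/
lemma koenig_core (u : ℕ → ℝ) (hrec : ∀ k, u (k+1) = φ (u k))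
    (hne : ∀ k, u k ≠ 0) (C q : ℝ) (hC : 0 < C) (hq0 : 0 ≤ q) (hq1 : q < 1)
    (hbd : ∀ k, |u k| ≤ C * q ^ k) :
    ∃ L : ℝ, L ≠ 0 ∧
      Tendsto (fun k => u k / c ^ k) atTop (nhds L) ∧
      (u 0 < 0 → L < 0) ∧ (0 < u 0 → 0 < L) := by
  set g : ℕ → ℝ := fun k =>
    Real.log ((Real.exp (c * u k / 2) - 1) / (c * u k / 2)) with hg
  have hv : ∀ k, c * u k / 2 ≠ 0 := fun k =>
    div_ne_zero (mul_ne_zero c_pos.ne' (hne k)) two_ne_zero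
  have hgb : ∀ k, |g k| ≤ (c * C / 2) * q ^ k := by
    intro k
    refine (abs_log_ratio_le (hv k)).trans ?_
    rw [abs_div, abs_mul, abs_of_pos c_pos]
    have := hbd k
    have h2 : |(2:ℝ)| = 2 := by norm_num
    rw [h2]
    have := c_pos
    have hq : (0:ℝ) ≤ q ^ k := pow_nonneg hq0 k
    rw [div_le_iff₀ (by norm_num : (0:ℝ) < 2)]
    nlinarith
  have hsum : Summable g := by
    apply Summable.of_abs
    apply Summable.of_nonneg_of_le (fun k => abs_nonneg _) hgb
    exact (summable_geometric_of_lt_one hq0 hq1).mul_left _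
  -- key identity
  have hexp : ∀ k, (Real.exp (c * u k / 2) - 1) / (c * u k / 2) = Real.exp (g k) := by
    intro k
    rw [hg, Real.exp_log (ratio_pos (hv k))]
  have hiden : ∀ k, u k / c ^ k = u 0 * Real.exp (∑ i ∈ Finset.range k, g i) := by
    intro k
    induction k with
    | zero => simp
    | succ k ih =>
      have hck : (c:ℝ) ^ k ≠ 0 := pow_ne_zero _ c_pos.ne'
      have hc : c ≠ 0 := c_pos.ne'
      have hu : u k ≠ 0 := hne k
      have hphi : φ (u k) = c * u k * ((Real.exp (c * u k / 2) - 1) / (c * u k / 2)) := by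
        unfold φ
        field_simp
      rw [Finset.sum_range_succ, Real.exp_add, hrec k, hphi, hexp k]
      rw [pow_succ]
      rw [show c * u k * Real.exp (g k) / (c ^ k * c)
            = (u k / c ^ k) * Real.exp (g k) by field_simp]
      rw [ih]; ring
  refine ⟨u 0 * Real.exp (∑' i, g i), ?_, ?_, ?_, ?_⟩
  · exact mul_ne_zero (hne 0) (Real.exp_pos _).ne'
  · have h1 : Tendsto (fun k => ∑ i ∈ Finset.range k, g i) atTop (nhds (∑' i, g i)) :=
      hsum.hasSum.tendsto_sum_nat
    have h2 : Tendsto (fun k => u 0 * Real.exp (∑ i ∈ Finset.range k, g i)) atTop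
        (nhds (u 0 * Real.exp (∑' i, g i))) :=
      (Real.continuous_exp.continuousAt.tendsto.comp h1).const_mul _
    exact h2.congr (fun k => (hiden k).symm)
  · intro h; exact mul_neg_of_neg_of_pos h (Real.exp_pos _)
  · intro h; exact mul_pos h (Real.exp_pos _)

end KoenigAux
namespace KoenigAux

lemma phi_cont : Continuous φ := by
  unfold φ; fun_prop

/-- Negative branch: geometric bound. -/
lemma neg_branch (u : ℕ → ℝ) (hrec : ∀ k, u (k+1) = φ (u k)) (h0 : u 0 < 0) :
    (∀ k, u k < 0) ∧ ∀ k, |u k| ≤ |u 0| * c ^ k := by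
  have hneg : ∀ k, u k < 0 := by
    intro k; induction k with
    | zero => exact h0
    | succ k ih => rw [hrec k]; exact phi_neg ih
  refine ⟨hneg, fun k => ?_⟩
  induction k with
  | zero => simp
  | succ k ih =>
    have h1 : c * u k ≤ u (k+1) := by rw [hrec k]; exact phi_ge
    have h2 := hneg k
    have h3 := hneg (k+1)
    rw [abs_of_neg h3]
    rw [abs_of_neg h2] at ih
    have hc := c_pos
    calc -u (k+1) ≤ -(c * u k) := by linarith
      _ = c * (-u k) := by ring
      _ ≤ c * (|u 0| * c ^ k) := by nlinarith
      _ = |u 0| * c ^ (k+1) := by ring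

/-- Positive branch: geometric bound. -/
lemma pos_branch (u : ℕ → ℝ) (hrec : ∀ k, u (k+1) = φ (u k))
    (h0 : 0 < u 0) (h2 : u 0 < 2) :
    (∀ k, 0 < u k) ∧ ∃ C > 0, ∀ k, |u k| ≤ C * (c * Real.sqrt 2) ^ k := by
  set q : ℝ := c * Real.sqrt 2 with hqdef
  have hq0 : 0 < q := mul_pos c_pos (by positivity)
  have hq1 : q < 1 := q_lt_one
  have hI : ∀ k, 0 < u k ∧ u k < 2 := by
    intro k; induction k with
    | zero => exact ⟨h0, h2⟩
    | succ k ih =>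
      rw [hrec k]
      exact ⟨phi_pos ih.1, (phi_lt_self ih.1 ih.2).trans ih.2⟩
  have hdec : ∀ k, u (k+1) < u k := fun k => by
    rw [hrec k]; exact phi_lt_self (hI k).1 (hI k).2
  have hanti : Antitone u := antitone_nat_of_succ_le fun k => (hdec k).le
  have hbdd : BddBelow (Set.range u) := ⟨0, fun x ⟨k, hk⟩ => hk ▸ (hI k).1.le⟩
  have htend : Tendsto u atTop (nhds (⨅ k, u k)) := tendsto_atTop_ciInf hanti hbdd
  set l : ℝ := ⨅ k, u k with hldef
  have hl0 : 0 ≤ l := le_ciInf fun k => (hI k).1.le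
  have hl2 : l < 2 := lt_of_le_of_lt (ciInf_le hbdd 0) h2
  have hfix : φ l = l := by
    have ha : Tendsto (fun k => u (k+1)) atTop (nhds l) :=
      htend.comp (tendsto_add_atTop_nat 1)
    have hb : Tendsto (fun k => φ (u k)) atTop (nhds (φ l)) :=
      (phi_cont.continuousAt.tendsto).comp htend
    have : Tendsto (fun k => u (k+1)) atTop (nhds (φ l)) :=
      hb.congr fun k => (hrec k).symm
    exact tendsto_nhds_unique this ha
  have hl : l = 0 := by
    by_contra h
    have hlpos : 0 < l := lt_of_le_of_ne hl0 (Ne.symm h)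
    exact absurd hfix (ne_of_lt (phi_lt_self hlpos hl2))
  rw [hl] at htend
  obtain ⟨N, hN⟩ := (htend.eventually (eventually_lt_nhds (by norm_num : (0:ℝ) < 1))).exists
  have hstep : ∀ j, u (N + j) ≤ q ^ j * u N ∧ u (N + j) ≤ 1 := by
    intro j; induction j with
    | zero => simpa using hN.le
    | succ j ih =>
      have hu := (hI (N + j)).1
      have hcon : φ (u (N + j)) ≤ q * u (N + j) := phi_contract hu ih.2
      have he : u (N + j + 1) ≤ q * u (N + j) := by rw [hrec]; exact hcon
      constructor
      · calc u (N + (j+1)) = u (N + j + 1) := by ring_nf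
          _ ≤ q * u (N + j) := he
          _ ≤ q * (q ^ j * u N) := by nlinarith [ih.1]
          _ = q ^ (j+1) * u N := by ring
      · calc u (N + (j+1)) = u (N + j + 1) := by ring_nf
          _ ≤ q * u (N + j) := he
          _ ≤ q * 1 := by nlinarith [ih.2, hu]
          _ ≤ 1 := by nlinarith
  refine ⟨fun k => (hI k).1, 2 / q ^ N, by positivity, fun k => ?_⟩
  rw [abs_of_pos (hI k).1]
  rcases le_or_gt N k with h | h
  · obtain ⟨j, rfl⟩ := Nat.exists_eq_add_of_le h
    have h1 := (hstep j).1
    have huN : u N ≤ 1 := by simpa using (hstep 0).2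
    have hqj : 0 < q ^ j := pow_pos hq0 j
    have : u (N + j) ≤ q ^ j := by nlinarith [(hI N).1]
    calc u (N + j) ≤ q ^ j := this
      _ ≤ 2 * q ^ j := by nlinarith
      _ = 2 / q ^ N * q ^ (N + j) := by
          rw [pow_add]; field_simp
  · have hk : u k < 2 := (hI k).2
    have hqq : q ^ N ≤ q ^ k := pow_le_pow_of_le_one hq0.le hq1.le h.le
    have hqN : 0 < q ^ N := pow_pos hq0 N
    have hqk : 0 < q ^ k := pow_pos hq0 k
    have : 2 ≤ 2 / q ^ N * q ^ k := by
      rw [div_mul_eq_mul_div, le_div_iff₀ hqN]; nlinarith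
    linarith

end KoenigAux
/-- For every `x₀ < 4` with `x₀ ≠ 2`, the Koenig limit
`L = lim_{k→∞} (f^[k](x₀) − 2) / (log 2)^k` (where `f(x) = 2^(x/2)`) exists, is nonzero,
is negative when `x₀ < 2` and positive when `2 < x₀`. -/
theorem rpow_two_half_koenig_limit (x₀ : ℝ) (hx₀ : x₀ < 4) (hx₀' : x₀ ≠ 2) :
    ∃ L : ℝ, L ≠ 0 ∧
      Filter.Tendsto
        (fun k : ℕ => ((fun x : ℝ => (2 : ℝ) ^ (x / 2))^[k] x₀ - 2) / (Real.log 2) ^ k)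
        Filter.atTop (nhds L) ∧
      (x₀ < 2 → L < 0) ∧ (2 < x₀ → 0 < L) := by
  open KoenigAux in
  set u : ℕ → ℝ := fun k => (fun x : ℝ => (2 : ℝ) ^ (x / 2))^[k] x₀ - 2 with hu
  have hrec : ∀ k, u (k+1) = KoenigAux.φ (u k) := by
    intro k
    show (fun x : ℝ => (2 : ℝ) ^ (x / 2))^[k+1] x₀ - 2 = _
    rw [Function.iterate_succ_apply']
    exact KoenigAux.phi_eq _
  have hu0 : u 0 = x₀ - 2 := by simp [hu]
  have hkey : ∃ L : ℝ, L ≠ 0 ∧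
      Filter.Tendsto (fun k => u k / KoenigAux.c ^ k) Filter.atTop (nhds L) ∧
      (u 0 < 0 → L < 0) ∧ (0 < u 0 → 0 < L) := by
    rcases lt_or_gt_of_ne hx₀' with h | h
    · -- negative branch
      have h0 : u 0 < 0 := by rw [hu0]; linarith
      obtain ⟨hneg, hbd⟩ := KoenigAux.neg_branch u hrec h0
      exact KoenigAux.koenig_core u hrec (fun k => (hneg k).ne)
        |u 0| KoenigAux.c (abs_pos.mpr (hneg 0).ne) KoenigAux.c_pos.le
        KoenigAux.c_lt_one hbd
    · -- positive branch
      have h0 : 0 < u 0 := by rw [hu0]; linarith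
      have h2 : u 0 < 2 := by rw [hu0]; linarith
      obtain ⟨hpos, C, hC, hbd⟩ := KoenigAux.pos_branch u hrec h0 h2
      exact KoenigAux.koenig_core u hrec (fun k => (hpos k).ne')
        C (KoenigAux.c * Real.sqrt 2) hC
        (mul_nonneg KoenigAux.c_pos.le (Real.sqrt_nonneg 2))
        KoenigAux.q_lt_one hbd
  obtain ⟨L, hL0, hLt, hLn, hLp⟩ := hkey
  refine ⟨L, hL0, hLt, fun h => hLn (by rw [hu0]; linarith), fun h => hLp (by rw [hu0]; linarith)⟩
end

section
/- Let φ(y) = 2·(2^(y/2) − 1). There exists a function Φ : ℝ → ℝ such that for every real y < 2 the sequence φ^[k](y) / (log 2)^k converges to Φ(y) as k → ∞, and Φ satisfies Schröder's equation Φ(φ(y)) = (log 2)·Φ(y) for every y < 2. -/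
/-!
Koenigs' argument. An orbit of `φ` starting below `2` is monotone and bounded, so it converges
to a fixed point of `φ` below `2`, and the only such fixed point is `0`. Near `0`,
`φ x = λ x + O(x²)` with `λ = log 2 ∈ (0, 1)`; hence the orbit decays like `ρ ^ k` for any
`ρ ∈ (λ, √λ)`, the increments of `φ^[k] y / λ ^ k` are `O((ρ² / λ) ^ k)`, and the sequence is
Cauchy. Schröder's equation follows by shifting `k` by one.
-/

open Real Filter Function Topology Asymptotics Set

theorem isBigO_iterate_of_eventually_norm_le {E : Type*} [SeminormedAddGroup E] {f : E → E}
    {ρ : ℝ} (hρ : 0 < ρ) (hf : ∀ᶠ x in 𝓝 0, ‖f x‖ ≤ ρ * ‖x‖) {y : E}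
    (hy : Tendsto (f^[·] y) atTop (𝓝 0)) :
    (f^[·] y) =O[atTop] (ρ ^ ·) := by
  obtain ⟨N, hN⟩ := eventually_atTop.1 (hy.eventually hf)
  have hdecay : ∀ j, ‖f^[N + j] y‖ ≤ ρ ^ j * ‖f^[N] y‖ := by
    intro j
    induction j with
    | zero => simp
    | succ j ih =>
      calc ‖f^[N + (j + 1)] y‖ = ‖f (f^[N + j] y)‖ := by
            rw [← add_assoc, iterate_succ_apply']
        _ ≤ ρ * ‖f^[N + j] y‖ := hN _ (Nat.le_add_right N j)
        _ ≤ ρ * (ρ ^ j * ‖f^[N] y‖) := by gcongr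
        _ = ρ ^ (j + 1) * ‖f^[N] y‖ := by ring
  refine IsBigO.of_bound (‖f^[N] y‖ / ρ ^ N) (eventually_atTop.2 ⟨N, fun k hk => ?_⟩)
  obtain ⟨j, rfl⟩ := Nat.exists_eq_add_of_le hk
  rw [norm_pow, Real.norm_of_nonneg hρ.le, pow_add]
  calc ‖f^[N + j] y‖ ≤ ρ ^ j * ‖f^[N] y‖ := hdecay j
    _ = ‖f^[N] y‖ / ρ ^ N * (ρ ^ N * ρ ^ j) := by field_simp

theorem exists_tendsto_iterate_div_pow {𝕜 : Type*} [NormedField 𝕜] [CompleteSpace 𝕜]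
    {f : 𝕜 → 𝕜} {μ : 𝕜} (hμ0 : μ ≠ 0) (hμ1 : ‖μ‖ < 1)
    (hf : (fun x => f x - μ * x) =O[𝓝 0] (· ^ 2)) {y : 𝕜}
    (hy : Tendsto (f^[·] y) atTop (𝓝 0)) :
    ∃ l, Tendsto (fun k => f^[k] y / μ ^ k) atTop (𝓝 l) := by
  have hμpos : 0 < ‖μ‖ := norm_pos_iff.2 hμ0
  obtain ⟨ρ, hμρ, hρ⟩ : ∃ ρ, ‖μ‖ < ρ ∧ ρ < √‖μ‖ :=
    exists_between ((lt_sqrt hμpos.le).2 (pow_lt_self_of_lt_one₀ hμpos hμ1 one_lt_two))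
  have hρ0 : 0 < ρ := hμpos.trans hμρ
  have hρ2 : ρ ^ 2 < ‖μ‖ := (lt_sqrt hρ0.le).1 hρ
  have hlin : ∀ᶠ x in 𝓝 0, ‖f x‖ ≤ ρ * ‖x‖ := by
    filter_upwards [(hf.trans_isLittleO (isLittleO_pow_id one_lt_two)).def
      (sub_pos.2 hμρ)] with x hx
    calc ‖f x‖ ≤ ‖f x - μ * x‖ + ‖μ * x‖ := by simpa using norm_add_le (f x - μ * x) (μ * x)
      _ ≤ (ρ - ‖μ‖) * ‖x‖ + ‖μ‖ * ‖x‖ := by rw [norm_mul]; gcongr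
      _ = ρ * ‖x‖ := by ring
  have hX := isBigO_iterate_of_eventually_norm_le hρ0 hlin hy
  set a : ℕ → 𝕜 := fun k => f^[k] y / μ ^ k
  have hstep : ∀ k, a (k + 1) - a k = (f (f^[k] y) - μ * f^[k] y) * (μ ^ (k + 1))⁻¹ := by
    intro k
    simp only [a, iterate_succ_apply']
    field_simp
    ring
  have hbig : (fun k => a (k + 1) - a k) =O[atTop] fun k => ‖μ‖⁻¹ * (ρ ^ 2 / ‖μ‖) ^ k := by
    simp only [hstep]
    have hinv : (fun k => (μ ^ (k + 1))⁻¹) =O[atTop] fun k => (‖μ‖ ^ (k + 1))⁻¹ :=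
      isBigO_of_le _ fun k => by simp
    refine ((hf.comp_tendsto hy).trans (hX.pow 2)).mul hinv |>.trans_eventuallyEq ?_
    exact Eventually.of_forall fun k => by simp only [div_pow]; field_simp; ring
  have hsum : Summable fun k => dist (a k) (a (k + 1)) := by
    have hdist : ∀ k, dist (a k) (a (k + 1)) = ‖a (k + 1) - a k‖ := fun k => by
      rw [dist_comm, dist_eq_norm]
    simp only [hdist]
    exact summable_of_isBigO_nat ((summable_geometric_of_lt_one (by positivity)
      ((div_lt_one hμpos).2 hρ2)).mul_left _) hbig.norm_left
  exact cauchySeq_tendsto_of_complete (cauchySeq_of_summable_dist hsum)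

theorem Filter.Tendsto.iterate_apply_div_pow {𝕜 : Type*} [Field 𝕜] [TopologicalSpace 𝕜]
    [ContinuousMul 𝕜] {f : 𝕜 → 𝕜} {μ y l : 𝕜} (hμ : μ ≠ 0)
    (h : Tendsto (fun k => f^[k] y / μ ^ k) atTop (𝓝 l)) :
    Tendsto (fun k => f^[k] (f y) / μ ^ k) atTop (𝓝 (μ * l)) := by
  refine ((tendsto_add_atTop_iff_nat 1).2 h).const_mul μ |>.congr fun k => ?_
  rw [iterate_succ_apply, pow_succ]
  field_simp

theorem exists_schroeder_solution {𝕜 : Type*} [NormedField 𝕜] [CompleteSpace 𝕜]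
    {f : 𝕜 → 𝕜} {μ : 𝕜} (hμ0 : μ ≠ 0) (hμ1 : ‖μ‖ < 1)
    (hf : (fun x => f x - μ * x) =O[𝓝 0] (· ^ 2)) {S : Set 𝕜}
    (hS : ∀ y ∈ S, Tendsto (f^[·] y) atTop (𝓝 0)) :
    ∃ Φ : 𝕜 → 𝕜, (∀ y ∈ S, Tendsto (fun k => f^[k] y / μ ^ k) atTop (𝓝 (Φ y))) ∧
      ∀ y ∈ S, Φ (f y) = μ * Φ y := by
  refine ⟨fun y => limUnder atTop fun k => f^[k] y / μ ^ k, fun y hy => ?_, fun y hy => ?_⟩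
  · obtain ⟨l, hl⟩ := exists_tendsto_iterate_div_pow hμ0 hμ1 hf (hS y hy)
    simpa only [hl.limUnder_eq] using hl
  · obtain ⟨l, hl⟩ := exists_tendsto_iterate_div_pow hμ0 hμ1 hf (hS y hy)
    simp only [(hl.iterate_apply_div_pow hμ0).limUnder_eq, hl.limUnder_eq]

noncomputable def phi (t : ℝ) : ℝ := 2 * ((2 : ℝ) ^ (t / 2) - 1)

theorem phi_eq_exp (t : ℝ) : phi t = 2 * (exp (log 2 * (t / 2)) - 1) := by
  rw [phi, rpow_def_of_pos two_pos]

@[simp] theorem phi_zero : phi 0 = 0 := by simp [phi]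

theorem continuous_phi : Continuous phi := by
  simp only [funext phi_eq_exp]
  fun_prop

theorem monotone_phi : Monotone phi := fun a b hab => by
  unfold phi
  gcongr
  norm_num

theorem log_two_mul_le_phi (x : ℝ) : log 2 * x ≤ phi x := by
  have := add_one_le_exp (log 2 * (x / 2))
  rw [phi_eq_exp]
  linarith

theorem phi_lt_self {x : ℝ} (h0 : 0 < x) (h2 : x < 2) : phi x < x := by
  have := rpow_one_add_lt_one_add_mul_self (s := 1) (by norm_num) one_ne_zero
    (half_pos h0) (by linarith)
  norm_num at this
  rw [phi]
  linarith

theorem self_lt_phi {x : ℝ} (hx : x < 0) : x < phi x := by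
  have : x < log 2 * x := by nlinarith [log_two_lt_d9]
  exact this.trans_le (log_two_mul_le_phi x)

theorem self_le_phi {x : ℝ} (hx : x ≤ 0) : x ≤ phi x := by
  rcases hx.eq_or_lt with rfl | hx
  · simp
  · exact (self_lt_phi hx).le

theorem phi_le_self {x : ℝ} (h0 : 0 ≤ x) (h2 : x < 2) : phi x ≤ x := by
  rcases h0.eq_or_lt with rfl | h0
  · simp
  · exact (phi_lt_self h0 h2).le

theorem eq_zero_of_isFixedPt_phi {x : ℝ} (h2 : x < 2) (hx : IsFixedPt phi x) : x = 0 := by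
  rcases lt_trichotomy x 0 with hneg | hzero | hpos
  · exact absurd hx (self_lt_phi hneg).ne'
  · exact hzero
  · exact absurd hx (phi_lt_self hpos h2).ne

theorem tendsto_iterate_phi {y : ℝ} (hy : y < 2) : Tendsto (phi^[·] y) atTop (𝓝 0) := by
  obtain ⟨l, hl, hl2⟩ : ∃ l, Tendsto (phi^[·] y) atTop (𝓝 l) ∧ l < 2 := by
    rcases le_total y 0 with hy0 | hy0
    · have hbdd : ∀ k, phi^[k] y ≤ 0 := fun k =>
        (monotone_phi.iterate k hy0).trans_eq (iterate_fixed phi_zero k)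
      exact ⟨_, tendsto_atTop_ciSup (monotone_phi.monotone_iterate_of_le_map (self_le_phi hy0))
        ⟨0, forall_mem_range.2 hbdd⟩, (ciSup_le hbdd).trans_lt two_pos⟩
    · have hbdd : ∀ k, 0 ≤ phi^[k] y := fun k =>
        (iterate_fixed phi_zero k).symm.trans_le (monotone_phi.iterate k hy0)
      have hbdd' : BddBelow (range (phi^[·] y)) := ⟨0, forall_mem_range.2 hbdd⟩
      exact ⟨_, tendsto_atTop_ciInf
        (monotone_phi.antitone_iterate_of_map_le (phi_le_self hy0 hy)) hbdd',
        (ciInf_le hbdd' 0).trans_lt hy⟩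
  have hfix : IsFixedPt phi l := isFixedPt_of_tendsto_iterate hl continuous_phi.continuousAt
  rwa [← eq_zero_of_isFixedPt_phi hl2 hfix]

theorem isBigO_phi_sub_log_two_mul : (fun x => phi x - log 2 * x) =O[𝓝 0] (· ^ 2) := by
  refine IsBigO.of_bound 1 ?_
  filter_upwards [Metric.closedBall_mem_nhds (0 : ℝ) one_pos] with x hx
  rw [Metric.mem_closedBall, dist_zero_right, norm_eq_abs] at hx
  have hL0 := log_pos one_lt_two
  have hL1 := log_two_lt_d9
  have hz : |log 2 * (x / 2)| ≤ 1 := by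
    rw [abs_mul, abs_of_pos hL0, abs_div, abs_two]
    nlinarith [abs_nonneg x]
  have := abs_exp_sub_one_sub_id_le hz
  rw [phi_eq_exp, norm_eq_abs, norm_pow, norm_eq_abs, sq_abs, one_mul]
  calc |2 * (exp (log 2 * (x / 2)) - 1) - log 2 * x|
      = 2 * |exp (log 2 * (x / 2)) - 1 - log 2 * (x / 2)| := by
        rw [← abs_two, ← abs_mul, abs_two]; ring_nf
    _ ≤ 2 * (log 2 * (x / 2)) ^ 2 := by gcongr
    _ = log 2 ^ 2 * x ^ 2 / 2 := by ring
    _ ≤ x ^ 2 := by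
        have hL2 : log 2 ^ 2 ≤ 1 := by nlinarith
        nlinarith [mul_le_mul_of_nonneg_right hL2 (sq_nonneg x)]

/-- For `φ(y) = 2·(2^(y/2) − 1)` there exists a Koenig linearizer `Φ` on `(-∞, 2)`:
`φ^[k](y) / (log 2)^k → Φ(y)` and `Φ(φ(y)) = (log 2)·Φ(y)` for all `y < 2`. -/
theorem schroeder_solution_for_conjugated_rpow :
    ∃ Φ : ℝ → ℝ,
      (∀ y : ℝ, y < 2 →
        Filter.Tendsto
          (fun k : ℕ => (fun t : ℝ => 2 * ((2 : ℝ) ^ (t / 2) - 1))^[k] y / (Real.log 2) ^ k)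
          Filter.atTop (nhds (Φ y))) ∧
      (∀ y : ℝ, y < 2 → Φ (2 * ((2 : ℝ) ^ (y / 2) - 1)) = Real.log 2 * Φ y) := by
  have hL1 : ‖log 2‖ < 1 := by
    rw [norm_of_nonneg (log_pos one_lt_two).le]
    linarith [log_two_lt_d9]
  exact exists_schroeder_solution (S := Iio 2) (log_pos one_lt_two).ne' hL1
    isBigO_phi_sub_log_two_mul fun _ => tendsto_iterate_phi
end

section
/- For every real x₀ > 2, the sequence of iterates g^[k](x₀) of the function g(x) = 2·log x / log 2 converges to 4 as k → ∞. -/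
open Real Filter

private lemma log2pos : (0:ℝ) < Real.log 2 := Real.log_pos (by norm_num)

private lemma log4eq : Real.log 4 = 2 * Real.log 2 := by
  rw [show (4:ℝ) = 2^2 by norm_num, Real.log_pow]; push_cast; ring

private lemma gkey1 {x : ℝ} (h2 : 2 < x) (h4 : x < 4) :
    x < 2 * Real.log x / Real.log 2 := by
  rw [lt_div_iff₀ log2pos]
  have h := strictConcaveOn_log_Ioi.2 (show (2:ℝ) ∈ Set.Ioi 0 by norm_num)
    (show (4:ℝ) ∈ Set.Ioi 0 by norm_num) (by norm_num)
    (show (0:ℝ) < (4 - x)/2 by linarith) (show (0:ℝ) < (x - 2)/2 by linarith)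
    (by ring)
  simp only [smul_eq_mul] at h
  have harg : (4 - x)/2 * 2 + (x - 2)/2 * 4 = x := by ring
  rw [harg, log4eq] at h
  nlinarith [h]

private lemma gkey2 {x : ℝ} (h2 : 0 < x) (h4 : x < 4) :
    2 * Real.log x / Real.log 2 < 4 := by
  rw [div_lt_iff₀ log2pos]
  have := Real.log_lt_log h2 h4
  rw [log4eq] at this
  linarith

private lemma gkey3 {x : ℝ} (h : 4 < x) : 2 * Real.log x / Real.log 2 < x := by
  rw [div_lt_iff₀ log2pos]
  have h1 : Real.log (x/4) < x/4 - 1 :=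
    Real.log_lt_sub_one_of_pos (by linarith) (by intro hc; rw [div_eq_one_iff_eq (by norm_num)] at hc; linarith)
  rw [Real.log_div (by linarith) (by norm_num), log4eq] at h1
  nlinarith [Real.log_two_gt_d9, h1]

private lemma gkey4 {x : ℝ} (h : 4 < x) : 4 < 2 * Real.log x / Real.log 2 := by
  rw [lt_div_iff₀ log2pos]
  have := Real.log_lt_log (by norm_num : (0:ℝ) < 4) h
  rw [log4eq] at this
  linarith

private lemma gcont {x : ℝ} (h : 0 < x) :
    ContinuousAt (fun x : ℝ => 2 * Real.log x / Real.log 2) x :=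
  ((continuousAt_const.mul (Real.continuousAt_log h.ne')).div_const _)

/-- For every `x₀ > 2`, the iterates of `g(x) = 2·log x / log 2` starting at `x₀`
converge to `4`. -/
theorem log_map_iterates_tendsto_four (x₀ : ℝ) (hx₀ : 2 < x₀) :
    Filter.Tendsto (fun k : ℕ => (fun x : ℝ => 2 * Real.log x / Real.log 2)^[k] x₀)
      Filter.atTop (nhds 4) := by
  set g : ℝ → ℝ := fun x : ℝ => 2 * Real.log x / Real.log 2 with hg
  set u : ℕ → ℝ := fun k => g^[k] x₀ with hu
  have hsucc : ∀ k, u (k+1) = g (u k) := fun k => Function.iterate_succ_apply' g k x₀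
  have hfix : g 4 = 4 := by simp only [hg, log4eq]; field_simp [log2pos.ne']; ring
  rcases lt_trichotomy x₀ 4 with hx4 | hx4 | hx4
  · -- 2 < x₀ < 4 : increasing case
    have hbnd : ∀ k, 2 < u k ∧ u k < 4 := by
      intro k; induction k with
      | zero => exact ⟨hx₀, hx4⟩
      | succ n ih =>
        rw [hsucc]
        exact ⟨lt_trans ih.1 (gkey1 ih.1 ih.2), gkey2 (by linarith [ih.1]) ih.2⟩
    have hmono : Monotone u := by
      apply monotone_nat_of_le_succ
      intro k; rw [hsucc]
      exact le_of_lt (gkey1 (hbnd k).1 (hbnd k).2)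
    have hbdd : BddAbove (Set.range u) := ⟨4, by rintro _ ⟨k, rfl⟩; exact (hbnd k).2.le⟩
    have htend := tendsto_atTop_ciSup hmono hbdd
    set L := ⨆ k, u k with hL
    have hL4 : L ≤ 4 := ciSup_le fun k => (hbnd k).2.le
    have hL2 : 2 < L := lt_of_lt_of_le hx₀ (le_ciSup hbdd 0)
    have hgL : g L = L := by
      have h1 : Tendsto (fun k => u (k+1)) atTop (nhds L) :=
        htend.comp (tendsto_add_atTop_nat 1)
      have h2 : Tendsto (fun k => g (u k)) atTop (nhds (g L)) :=
        ((gcont (by linarith)).tendsto.comp htend)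
      have : (fun k => u (k+1)) = fun k => g (u k) := funext hsucc
      rw [this] at h1
      exact tendsto_nhds_unique h2 h1
    have hL : L = 4 := by
      by_contra hne
      have : L < 4 := lt_of_le_of_ne hL4 hne
      exact absurd hgL (ne_of_gt (gkey1 hL2 this))
    rwa [hL] at htend
  · -- x₀ = 4 : constant
    have : ∀ k, u k = 4 := by
      intro k; induction k with
      | zero => exact hx4
      | succ n ih => rw [hsucc, ih, hfix]
    simpa [hu] using (funext this ▸ tendsto_const_nhds : Tendsto u atTop (nhds 4))
  · -- x₀ > 4 : decreasing case
    have hbnd : ∀ k, 4 < u k := by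
      intro k; induction k with
      | zero => exact hx4
      | succ n ih => rw [hsucc]; exact gkey4 ih
    have hanti : Antitone u := by
      apply antitone_nat_of_succ_le
      intro k; rw [hsucc]
      exact le_of_lt (gkey3 (hbnd k))
    have hbdd : BddBelow (Set.range u) := ⟨4, by rintro _ ⟨k, rfl⟩; exact (hbnd k).le⟩
    have htend := tendsto_atTop_ciInf hanti hbdd
    set L := ⨅ k, u k with hL
    have hL4 : 4 ≤ L := le_ciInf fun k => (hbnd k).le
    have hgL : g L = L := by
      have h1 : Tendsto (fun k => u (k+1)) atTop (nhds L) :=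
        htend.comp (tendsto_add_atTop_nat 1)
      have h2 : Tendsto (fun k => g (u k)) atTop (nhds (g L)) :=
        ((gcont (by linarith)).tendsto.comp htend)
      have : (fun k => u (k+1)) = fun k => g (u k) := funext hsucc
      rw [this] at h1
      exact tendsto_nhds_unique h2 h1
    have hL : L = 4 := by
      by_contra hne
      have : 4 < L := lt_of_le_of_ne hL4 (Ne.symm hne)
      exact absurd hgL (ne_of_lt (gkey3 this))
    rwa [hL] at htend
end

section
/- Let ψ(z) = 2·(log(z + 4)/log 2 − 2). There exists a function Ψ : ℝ → ℝ such that for every real z > −2 the sequence ψ^[k](z) · (log 4)^k converges to Ψ(z) as k → ∞, and Ψ satisfies Schröder's equation Ψ(ψ(z)) = Ψ(z) / log 4 for every z > −2. -/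
/-!
`ψ(t) = (4 / log 4) · log (1 + t/4)` is strictly concave on `(-4, ∞)` with `ψ 0 = 0`,
`ψ (-2) = -2` and tangent `t / log 4` at `0`, so `b_k = ψ^[k] z · (log 4)^k` is antitone.
For `z ≥ 0` it stays nonnegative. For `-2 < z < 0` concavity gives the contraction
`ψ t ≥ ρ t` on `[z, 0]` with `ρ = ψ z / z < 1`, so the iterates decay geometrically;
the second-order bound `ψ t ≥ t (1 - t/2) / log 4` then gives
`b_{k+1} ≥ b_k (1 + |ψ^[k] z| / 2)`, and the product of these factors converges.
-/

open Filter Real Set Topology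

section Sequences

theorem antitone_iterate_mul_pow {f : ℝ → ℝ} {s : Set ℝ} {L z : ℝ} (hL : 0 < L)
    (hs : MapsTo f s s) (hf : ∀ t ∈ s, f t ≤ t / L) (hz : z ∈ s) :
    Antitone fun k : ℕ => f^[k] z * L ^ k := by
  refine antitone_nat_of_succ_le fun k => ?_
  calc f^[k + 1] z * L ^ (k + 1) = f (f^[k] z) * L ^ (k + 1) := by
        rw [Function.iterate_succ_apply']
    _ ≤ f^[k] z / L * L ^ (k + 1) := by
        gcongr
        exact hf _ (hs.iterate k hz)
    _ = f^[k] z * L ^ k := by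
        rw [pow_succ]
        field_simp

theorem bddBelow_range_of_mul_one_add_le {b ε : ℕ → ℝ} (hb : ∀ k, b k ≤ 0)
    (hε : ∀ k, 0 ≤ ε k) (hsum : Summable ε) (hstep : ∀ k, b k * (1 + ε k) ≤ b (k + 1)) :
    BddBelow (range b) := by
  have partial_bound : ∀ k, b 0 * exp (∑ i ∈ Finset.range k, ε i) ≤ b k := by
    intro k
    induction k with
    | zero => simp
    | succ k ih =>
      calc b 0 * exp (∑ i ∈ Finset.range (k + 1), ε i)
          = b 0 * exp (∑ i ∈ Finset.range k, ε i) * exp (ε k) := by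
            rw [Finset.sum_range_succ, exp_add, mul_assoc]
        _ ≤ b k * exp (ε k) := by gcongr
        _ ≤ b k * (1 + ε k) :=
            mul_le_mul_of_nonpos_left (by linarith [add_one_le_exp (ε k)]) (hb k)
        _ ≤ b (k + 1) := hstep k
  refine ⟨b 0 * exp (∑' i, ε i), ?_⟩
  rintro _ ⟨k, rfl⟩
  calc b 0 * exp (∑' i, ε i) ≤ b 0 * exp (∑ i ∈ Finset.range k, ε i) :=
        mul_le_mul_of_nonpos_left
          (exp_le_exp.2 (hsum.sum_le_tsum _ fun i _ => hε i)) (hb 0)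
    _ ≤ b k := partial_bound k

theorem Filter.Tendsto.iterate_map_mul_pow {f : ℝ → ℝ} {L z l : ℝ} (hL : L ≠ 0)
    (h : Tendsto (fun k : ℕ => f^[k] z * L ^ k) atTop (𝓝 l)) :
    Tendsto (fun k : ℕ => f^[k] (f z) * L ^ k) atTop (𝓝 (l / L)) := by
  refine ((h.comp (tendsto_add_atTop_nat 1)).div_const L).congr fun k => ?_
  simp only [Function.comp_apply, Function.iterate_succ_apply, pow_succ]
  field_simp

end Sequences

section Concave

variable {f : ℝ → ℝ} {s : Set ℝ} {z t : ℝ}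

theorem ConcaveOn.div_mul_le_of_map_zero (hf : ConcaveOn ℝ s f) (hzs : z ∈ s) (h0s : 0 ∈ s)
    (hf0 : f 0 = 0) (hz : z < 0) (hzt : z ≤ t) (ht : t ≤ 0) :
    t / z * f z ≤ f t := by
  have h := hf.2 hzs h0s (div_nonneg_of_nonpos ht hz.le)
    (sub_nonneg.2 ((div_le_one_of_neg hz).2 hzt)) (add_sub_cancel _ _)
  rwa [smul_eq_mul, smul_eq_mul, smul_eq_mul, smul_eq_mul, mul_zero, add_zero, hf0, mul_zero,
    add_zero, div_mul_cancel₀ t hz.ne] at h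

theorem StrictConcaveOn.lt_map_of_map_eq_self {x y : ℝ} (hf : StrictConcaveOn ℝ s f)
    (hxs : x ∈ s) (hys : y ∈ s) (hfx : f x = x) (hfy : f y = y) (hz : z ∈ Ioo x y) :
    z < f z := by
  obtain ⟨hxz, hzy⟩ := hz
  have hxy : 0 < y - x := by linarith
  have hcomb : (y - z) / (y - x) * x + (z - x) / (y - x) * y = z := by
    field_simp
    ring
  have h := hf.2 hxs hys (by linarith : x ≠ y)
    (div_pos (sub_pos.2 hzy) hxy) (div_pos (sub_pos.2 hxz) hxy) (by field_simp; ring)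
  rwa [smul_eq_mul, smul_eq_mul, smul_eq_mul, smul_eq_mul, hfx, hfy, hcomb] at h

end Concave

noncomputable def koenigsLimit (f : ℝ → ℝ) (L z : ℝ) : ℝ :=
  limUnder atTop fun k : ℕ => f^[k] z * L ^ k

namespace ConjugatedLog

noncomputable def psi (t : ℝ) : ℝ := 2 * (Real.log (t + 4) / Real.log 2 - 2)

theorem log_four_eq : Real.log 4 = 2 * Real.log 2 := by
  rw [show (4 : ℝ) = 2 ^ 2 by norm_num, Real.log_pow, Nat.cast_ofNat]

theorem psi_mul_log_four {t : ℝ} (ht : -4 < t) :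
    psi t * Real.log 4 = 4 * Real.log ((t + 4) / 4) := by
  have : Real.log 2 ≠ 0 := by positivity
  rw [psi, Real.log_div (by linarith) (by norm_num), log_four_eq]
  field_simp
  ring

theorem psi_zero : psi 0 = 0 := by
  have : Real.log 2 ≠ 0 := by positivity
  simp [psi, log_four_eq, this]

theorem psi_neg_two : psi (-2) = -2 := by
  have : Real.log 2 ≠ 0 := by positivity
  norm_num [psi, this]

theorem strictMonoOn_psi : StrictMonoOn psi (Ioi (-4)) := by
  intro s hs t _ hst
  have : 0 < Real.log 2 := by positivity
  have : 0 < s + 4 := by linarith [mem_Ioi.1 hs]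
  unfold psi
  gcongr

theorem strictConcaveOn_psi : StrictConcaveOn ℝ (Ioi (-4)) psi := by
  refine ⟨convex_Ioi _, fun x hx y hy hxy a b ha hb hab => ?_⟩
  have hlog := strictConcaveOn_log_Ioi.2 (x := x + 4) (y := y + 4)
    (by simp only [mem_Ioi] at hx ⊢; linarith) (by simp only [mem_Ioi] at hy ⊢; linarith)
    (by simpa using hxy) ha hb hab
  have h2 : 0 < Real.log 2 := by positivity
  simp only [smul_eq_mul, psi] at hlog ⊢
  rw [show a * (x + 4) + b * (y + 4) = a * x + b * y + 4 by linear_combination 4 * hab] at hlog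
  have key : a * (2 * (Real.log (x + 4) / Real.log 2 - 2)) +
      b * (2 * (Real.log (y + 4) / Real.log 2 - 2)) =
      2 * ((a * Real.log (x + 4) + b * Real.log (y + 4)) / Real.log 2 - 2) := by
    field_simp
    linear_combination (-2 * Real.log 2) * hab
  rw [key]
  gcongr

theorem mapsTo_psi_Ioi : MapsTo psi (Ioi (-2)) (Ioi (-2)) := fun t ht =>
  psi_neg_two ▸ strictMonoOn_psi (by norm_num) (by simp only [mem_Ioi] at ht ⊢; linarith) ht

theorem mapsTo_psi_Ici : MapsTo psi (Ici 0) (Ici 0) := fun t ht =>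
  psi_zero ▸ strictMonoOn_psi.monotoneOn (by norm_num)
    (by simp only [mem_Ici, mem_Ioi] at ht ⊢; linarith) ht

theorem mapsTo_psi_Ioo : MapsTo psi (Ioo (-2) 0) (Ioo (-2) 0) := fun t ht =>
  ⟨mapsTo_psi_Ioi ht.1, psi_zero ▸ strictMonoOn_psi (by simp only [mem_Ioi]; linarith [ht.1])
    (by norm_num) ht.2⟩

theorem psi_le_div_log_four {t : ℝ} (ht : -4 < t) : psi t ≤ t / Real.log 4 := by
  rw [le_div_iff₀ (by positivity), psi_mul_log_four ht]
  linarith [Real.log_le_sub_one_of_pos (show 0 < (t + 4) / 4 by linarith)]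

theorem mul_one_sub_half_div_log_four_le_psi {t : ℝ} (ht : -2 ≤ t) :
    t * (1 - t / 2) / Real.log 4 ≤ psi t := by
  rw [div_le_iff₀ (by positivity), psi_mul_log_four (by linarith)]
  have hlog := Real.one_sub_inv_le_log_of_pos (show 0 < (t + 4) / 4 by linarith)
  have h4 : t + 4 ≠ 0 := by linarith
  have hquad : t * (1 - t / 2) ≤ 4 * (1 - ((t + 4) / 4)⁻¹) := by
    rw [show 4 * (1 - ((t + 4) / 4)⁻¹) = 4 * t / (t + 4) by field_simp; ring,
      le_div_iff₀ (by linarith)]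
    nlinarith [mul_nonneg (sq_nonneg t) (show 0 ≤ t + 2 by linarith)]
  linarith

theorem psi_div_self_mem_Ioo {z : ℝ} (hz : z ∈ Ioo (-2) 0) : psi z / z ∈ Ioo 0 1 :=
  ⟨div_pos_of_neg_of_neg (mapsTo_psi_Ioo hz).2 hz.2, (div_lt_one_of_neg hz.2).2 <|
    strictConcaveOn_psi.lt_map_of_map_eq_self (by norm_num) (by norm_num) psi_neg_two psi_zero hz⟩

theorem pow_mul_le_psi_iterate {z : ℝ} (hz : z ∈ Ioo (-2) 0) (k : ℕ) :
    (psi z / z) ^ k * z ≤ psi^[k] z := by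
  obtain ⟨hρ0, hρ1⟩ := psi_div_self_mem_Ioo hz
  induction k with
  | zero => simp
  | succ k ih =>
    have hk := mapsTo_psi_Ioo.iterate k hz
    have hzk : z ≤ psi^[k] z := by
      linarith [mul_le_mul_of_nonpos_right (pow_le_one₀ hρ0.le hρ1.le (n := k)) hz.2.le]
    calc (psi z / z) ^ (k + 1) * z = psi z / z * ((psi z / z) ^ k * z) := by ring
      _ ≤ psi z / z * psi^[k] z := by gcongr
      _ = psi^[k] z / z * psi z := by ring
      _ ≤ psi (psi^[k] z) := strictConcaveOn_psi.concaveOn.div_mul_le_of_map_zero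
          (mem_Ioi.2 (by linarith [hz.1])) (by norm_num) psi_zero hz.2 hzk hk.2.le
      _ = psi^[k + 1] z := (Function.iterate_succ_apply' psi k z).symm

theorem exists_tendsto_psi_iterate_mul_pow_of_nonneg {z : ℝ} (hz : 0 ≤ z) :
    ∃ l, Tendsto (fun k : ℕ => psi^[k] z * Real.log 4 ^ k) atTop (𝓝 l) := by
  have hanti := antitone_iterate_mul_pow (by positivity) mapsTo_psi_Ici
    (fun t ht => psi_le_div_log_four (by linarith [mem_Ici.1 ht])) (mem_Ici.2 hz)
  refine ⟨_, tendsto_atTop_ciInf hanti ⟨0, ?_⟩⟩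
  rintro _ ⟨k, rfl⟩
  exact mul_nonneg (mapsTo_psi_Ici.iterate k hz) (by positivity)

theorem exists_tendsto_psi_iterate_mul_pow_of_neg {z : ℝ} (hz : z ∈ Ioo (-2) 0) :
    ∃ l, Tendsto (fun k : ℕ => psi^[k] z * Real.log 4 ^ k) atTop (𝓝 l) := by
  have hL : 0 < Real.log 4 := by positivity
  have hmem (k : ℕ) : psi^[k] z ∈ Ioo (-2) 0 := mapsTo_psi_Ioo.iterate k hz
  have hanti := antitone_iterate_mul_pow hL mapsTo_psi_Ioi
    (fun t ht => psi_le_div_log_four (by linarith [mem_Ioi.1 ht])) hz.1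
  obtain ⟨hρ0, hρ1⟩ := psi_div_self_mem_Ioo hz
  have hsum : Summable fun k => -psi^[k] z / 2 :=
    .of_nonneg_of_le (fun k => by linarith [(hmem k).2])
      (fun k => by linarith [pow_mul_le_psi_iterate hz k])
      ((summable_geometric_of_lt_one hρ0.le hρ1).mul_left (-z / 2))
  have hstep (k : ℕ) : psi^[k] z * Real.log 4 ^ k * (1 + -psi^[k] z / 2) ≤
      psi^[k + 1] z * Real.log 4 ^ (k + 1) := by
    rw [Function.iterate_succ_apply', pow_succ]
    calc psi^[k] z * Real.log 4 ^ k * (1 + -psi^[k] z / 2)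
        = psi^[k] z * (1 - psi^[k] z / 2) / Real.log 4 * (Real.log 4 ^ k * Real.log 4) := by
          field_simp
          ring
      _ ≤ psi (psi^[k] z) * (Real.log 4 ^ k * Real.log 4) := by
          gcongr
          exact mul_one_sub_half_div_log_four_le_psi (hmem k).1.le
  refine ⟨_, tendsto_atTop_ciInf hanti (bddBelow_range_of_mul_one_add_le ?_ ?_ hsum hstep)⟩
  · exact fun k => mul_nonpos_of_nonpos_of_nonneg (hmem k).2.le (by positivity)
  · exact fun k => by linarith [(hmem k).2]

theorem exists_tendsto_psi_iterate_mul_pow {z : ℝ} (hz : -2 < z) :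
    ∃ l, Tendsto (fun k : ℕ => psi^[k] z * Real.log 4 ^ k) atTop (𝓝 l) := by
  rcases lt_or_ge z 0 with hneg | hnonneg
  · exact exists_tendsto_psi_iterate_mul_pow_of_neg ⟨hz, hneg⟩
  · exact exists_tendsto_psi_iterate_mul_pow_of_nonneg hnonneg

end ConjugatedLog

open ConjugatedLog

/-- For `ψ(z) = 2·(log(z+4)/log 2 − 2)` there exists a Koenig linearizer `Ψ` on `(-2, ∞)`:
`ψ^[k](z) · (log 4)^k → Ψ(z)` and `Ψ(ψ(z)) = Ψ(z) / log 4` for all `z > −2`. -/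
theorem schroeder_solution_for_conjugated_log :
    ∃ Ψ : ℝ → ℝ,
      (∀ z : ℝ, -2 < z →
        Filter.Tendsto
          (fun k : ℕ =>
            (fun t : ℝ => 2 * (Real.log (t + 4) / Real.log 2 - 2))^[k] z * (Real.log 4) ^ k)
          Filter.atTop (nhds (Ψ z))) ∧
      (∀ z : ℝ, -2 < z →
        Ψ (2 * (Real.log (z + 4) / Real.log 2 - 2)) = Ψ z / Real.log 4) := by
  have hconv (z : ℝ) (hz : -2 < z) :
      Tendsto (fun k : ℕ => psi^[k] z * Real.log 4 ^ k) atTop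
        (𝓝 (koenigsLimit psi (Real.log 4) z)) :=
    tendsto_nhds_limUnder (exists_tendsto_psi_iterate_mul_pow hz)
  refine ⟨koenigsLimit psi (Real.log 4), hconv, fun z hz => ?_⟩
  exact tendsto_nhds_unique (hconv (psi z) (mapsTo_psi_Ioi hz))
    ((hconv z hz).iterate_map_mul_pow (by positivity))
end

section
/- There exists a function F : ℝ → ℝ that is continuous and strictly decreasing on the open interval (2, 4) and satisfies Abel's equation F(2^(x/2)) = F(x) + 1 for every x with 2 < x < 4. -/
/-!
Near its attracting fixed point `2`, `f x = 2 ^ (x / 2)` has multiplier `λ = f' 2 = log 2 ∈ (0, 1)`,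
and the Koenigs function `K x = lim (fⁿ x - 2) / λⁿ` linearises it: `K (f x) = λ K x`. Hence
`F = log_λ K` satisfies Abel's equation. The sequence is increasing because `f y - 2 ≥ λ (y - 2)`,
and bounded because `f y - 2 ≤ λ (y - 2) e^{λ (y - 2) / 2}` while the orbit contracts geometrically
towards `2`. Each `(fⁿ x - 2) / λⁿ` is convex, so their supremum `K` is convex and therefore
continuous on the open interval; and `f y - f x ≥ λ (y - x)` for `2 ≤ x ≤ y` gives
`K y - K x ≥ y - x`, so `K` is strictly increasing and `F` strictly decreasing.
-/

open Real Set Function Filter Topology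

theorem convexOn_ciSup {ι E : Type*} [Nonempty ι] [AddCommMonoid E] [Module ℝ E] {s : Set E}
    {f : ι → E → ℝ} (hf : ∀ i, ConvexOn ℝ s (f i))
    (hbdd : ∀ x ∈ s, BddAbove (range fun i => f i x)) :
    ConvexOn ℝ s fun x => ⨆ i, f i x := by
  refine ⟨(hf (Classical.arbitrary ι)).1, fun x hx y hy a b ha hb hab => ciSup_le fun i => ?_⟩
  calc f i (a • x + b • y) ≤ a • f i x + b • f i y := (hf i).2 hx hy ha hb hab
    _ ≤ a • (⨆ i, f i x) + b • ⨆ i, f i y :=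
      add_le_add (smul_le_smul_of_nonneg_left (le_ciSup (hbdd x hx) i) ha)
        (smul_le_smul_of_nonneg_left (le_ciSup (hbdd y hy) i) hb)

theorem ConvexOn.iterate {𝕜 : Type*} [Semiring 𝕜] [PartialOrder 𝕜] [IsOrderedRing 𝕜]
    {g : 𝕜 → 𝕜} (hg : ConvexOn 𝕜 univ g) (hmono : Monotone g) (n : ℕ) :
    ConvexOn 𝕜 univ g^[n] := by
  induction n with
  | zero => exact convexOn_id convex_univ
  | succ n ih =>
    rw [iterate_succ']
    exact ⟨convex_univ, fun x _ y _ a b ha hb hab =>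
      (hmono (ih.2 trivial trivial ha hb hab)).trans (hg.2 trivial trivial ha hb hab)⟩

theorem pow_mul_sub_le_iterate_sub {𝕜 : Type*} [CommRing 𝕜] [LinearOrder 𝕜]
    [IsStrictOrderedRing 𝕜] {g : 𝕜 → 𝕜} {s : Set 𝕜} {L : 𝕜} (hL : 0 ≤ L) (hs : MapsTo g s s)
    (hg : ∀ x ∈ s, ∀ y ∈ s, x ≤ y → L * (y - x) ≤ g y - g x) {x y : 𝕜} (hx : x ∈ s)
    (hy : y ∈ s) (hxy : x ≤ y) (n : ℕ) :
    L ^ n * (y - x) ≤ g^[n] y - g^[n] x := by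
  induction n with
  | zero => simp
  | succ n ih =>
    have hle : g^[n] x ≤ g^[n] y :=
      sub_nonneg.mp ((mul_nonneg (pow_nonneg hL n) (sub_nonneg.mpr hxy)).trans ih)
    rw [iterate_succ_apply', iterate_succ_apply', pow_succ', mul_assoc]
    calc L * (L ^ n * (y - x)) ≤ L * (g^[n] y - g^[n] x) := mul_le_mul_of_nonneg_left ih hL
      _ ≤ _ := hg _ (hs.iterate n hx) _ (hs.iterate n hy) hle

noncomputable def twoPowHalf (x : ℝ) : ℝ := 2 ^ (x / 2)

lemma twoPowHalf_eq (x : ℝ) : twoPowHalf x = 2 * exp (log 2 / 2 * (x - 2)) := by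
  rw [twoPowHalf, rpow_def_of_pos two_pos,
    show log 2 * (x / 2) = log 2 + log 2 / 2 * (x - 2) by ring, exp_add, exp_log two_pos]

lemma twoPowHalf_two : twoPowHalf 2 = 2 := by norm_num [twoPowHalf]

lemma twoPowHalf_four : twoPowHalf 4 = 4 := by norm_num [twoPowHalf]

lemma strictMono_twoPowHalf : StrictMono twoPowHalf := fun _ _ h =>
  rpow_lt_rpow_of_exponent_lt one_lt_two (by linarith)

lemma strictConvexOn_twoPowHalf : StrictConvexOn ℝ univ twoPowHalf := by
  refine ⟨convex_univ, fun x _ y _ hxy a b ha hb hab => ?_⟩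
  have hne : log 2 * (x / 2) ≠ log 2 * (y / 2) := by
    intro h
    exact hxy (by linarith [mul_left_cancel₀ (log_pos one_lt_two).ne' h])
  have := strictConvexOn_exp.2 trivial trivial hne ha hb hab
  simp only [twoPowHalf, rpow_def_of_pos two_pos, smul_eq_mul] at this ⊢
  convert this using 2
  ring

lemma twoPowHalf_lt_self {x : ℝ} (hx : x ∈ Ioo 2 4) : twoPowHalf x < x := by
  have h := strictConvexOn_twoPowHalf.secant_strict_mono (a := 2) trivial trivial trivial
    hx.1.ne' (by norm_num) hx.2
  rw [twoPowHalf_two, twoPowHalf_four, div_lt_iff₀ (by linarith [hx.1])] at h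
  linarith

lemma sub_two_mul_sub_twoPowHalf_le {x y : ℝ} (hy : y ∈ Ioc 2 x) :
    (y - 2) * (x - twoPowHalf x) ≤ (x - 2) * (y - twoPowHalf y) := by
  have h := strictConvexOn_twoPowHalf.convexOn.secant_mono (a := 2) trivial trivial trivial
    hy.1.ne' (hy.1.trans_le hy.2).ne' hy.2
  rw [twoPowHalf_two, div_le_div_iff₀ (by linarith [hy.1]) (by linarith [hy.1, hy.2])] at h
  linarith

lemma log_two_mul_sub_le {x y : ℝ} (hx : 2 ≤ x) (hxy : x ≤ y) :
    log 2 * (y - x) ≤ twoPowHalf y - twoPowHalf x := by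
  have hsplit : twoPowHalf y - twoPowHalf x =
      twoPowHalf x * (exp (log 2 / 2 * (y - x)) - 1) := by
    rw [twoPowHalf_eq, twoPowHalf_eq,
      show log 2 / 2 * (y - 2) = log 2 / 2 * (x - 2) + log 2 / 2 * (y - x) by ring, exp_add]
    ring
  have hfx : 2 ≤ twoPowHalf x := twoPowHalf_two ▸ strictMono_twoPowHalf.monotone hx
  have hexp := add_one_le_exp (log 2 / 2 * (y - x))
  have hd : 0 ≤ log 2 / 2 * (y - x) := by
    have := log_pos one_lt_two
    positivity
  rw [hsplit]
  nlinarith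

lemma twoPowHalf_sub_two_le (x : ℝ) :
    twoPowHalf x - 2 ≤ log 2 * (x - 2) * exp (log 2 / 2 * (x - 2)) := by
  rw [twoPowHalf_eq]
  have h := mul_le_mul_of_nonneg_right (one_sub_le_exp_neg (log 2 / 2 * (x - 2)))
    (exp_pos (log 2 / 2 * (x - 2))).le
  rw [← exp_add, neg_add_cancel, exp_zero] at h
  linear_combination 2 * h

lemma mapsTo_twoPowHalf_Ici : MapsTo twoPowHalf (Ici 2) (Ici 2) := fun _ hx =>
  twoPowHalf_two ▸ strictMono_twoPowHalf.monotone hx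

lemma mapsTo_twoPowHalf_Ioc {b : ℝ} (hb : b < 4) : MapsTo twoPowHalf (Ioc 2 b) (Ioc 2 b) :=
  fun _ hx => ⟨twoPowHalf_two ▸ strictMono_twoPowHalf hx.1,
    (twoPowHalf_lt_self ⟨hx.1, hx.2.trans_lt hb⟩).le.trans hx.2⟩

noncomputable def koenigsSeq (n : ℕ) (x : ℝ) : ℝ := (twoPowHalf^[n] x - 2) / log 2 ^ n

noncomputable def koenigs (x : ℝ) : ℝ := ⨆ n, koenigsSeq n x

lemma koenigsSeq_twoPowHalf (n : ℕ) (x : ℝ) :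
    koenigsSeq n (twoPowHalf x) = log 2 * koenigsSeq (n + 1) x := by
  have := (log_pos one_lt_two).ne'
  rw [koenigsSeq, koenigsSeq, ← iterate_succ_apply, pow_succ]
  field_simp

lemma koenigsSeq_succ_le (n : ℕ) (x : ℝ) :
    koenigsSeq (n + 1) x ≤ koenigsSeq n x * exp (log 2 / 2 * (twoPowHalf^[n] x - 2)) := by
  have hpow := pow_pos (log_pos one_lt_two) n
  rw [koenigsSeq, koenigsSeq, iterate_succ_apply', pow_succ, div_mul_eq_mul_div,
    div_le_div_iff₀ (mul_pos hpow (log_pos one_lt_two)) hpow]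
  nlinarith [twoPowHalf_sub_two_le (twoPowHalf^[n] x)]

lemma monotone_koenigsSeq {x : ℝ} (hx : 2 ≤ x) : Monotone fun n => koenigsSeq n x := by
  refine monotone_nat_of_le_succ fun n => ?_
  have hpow := pow_pos (log_pos one_lt_two) n
  have h := log_two_mul_sub_le le_rfl (mapsTo_twoPowHalf_Ici.iterate n hx)
  rw [twoPowHalf_two] at h
  rw [koenigsSeq, koenigsSeq, iterate_succ_apply', pow_succ,
    div_le_div_iff₀ hpow (mul_pos hpow (log_pos one_lt_two))]
  nlinarith

lemma koenigsSeq_le {x : ℝ} (hx : x ∈ Ioo 2 4) (n : ℕ) :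
    koenigsSeq n x ≤
      (x - 2) * exp (log 2 / 2 * (x - 2) * (x - twoPowHalf^[n] x) / (x - twoPowHalf x)) := by
  have hgap : 0 < x - twoPowHalf x := sub_pos.mpr (twoPowHalf_lt_self hx)
  -- By convexity `y - f y ≥ (x - f x) / (x - 2) * (y - 2)` along the orbit, so the exponents
  -- `log 2 / 2 * (fᵏ x - 2)` contributed by `koenigsSeq_succ_le` telescope.
  induction n with
  | zero => simp [koenigsSeq]
  | succ n ih =>
    set y := twoPowHalf^[n] x
    have hy : y ∈ Ioc 2 x := (mapsTo_twoPowHalf_Ioc hx.2).iterate n ⟨hx.1, le_rfl⟩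
    have hexp : log 2 / 2 * (x - 2) * (x - y) / (x - twoPowHalf x) + log 2 / 2 * (y - 2) ≤
        log 2 / 2 * (x - 2) * (x - twoPowHalf^[n + 1] x) / (x - twoPowHalf x) := by
      rw [iterate_succ_apply', div_add' _ _ _ hgap.ne', div_le_div_iff_of_pos_right hgap]
      nlinarith [sub_two_mul_sub_twoPowHalf_le hy, log_pos one_lt_two]
    calc koenigsSeq (n + 1) x ≤ koenigsSeq n x * exp (log 2 / 2 * (y - 2)) :=
          koenigsSeq_succ_le n x
      _ ≤ (x - 2) * exp (log 2 / 2 * (x - 2) * (x - y) / (x - twoPowHalf x)) *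
          exp (log 2 / 2 * (y - 2)) := mul_le_mul_of_nonneg_right ih (exp_pos _).le
      _ ≤ _ := by
        rw [mul_assoc, ← exp_add]
        gcongr
        linarith [hx.1]

lemma bddAbove_koenigsSeq {x : ℝ} (hx : x ∈ Ioo 2 4) :
    BddAbove (range fun n => koenigsSeq n x) := by
  refine ⟨(x - 2) * exp (log 2 / 2 * (x - 2) * (x - 2) / (x - twoPowHalf x)), ?_⟩
  rintro _ ⟨n, rfl⟩
  have hgap : 0 < x - twoPowHalf x := sub_pos.mpr (twoPowHalf_lt_self hx)
  have hy := (mapsTo_twoPowHalf_Ioc hx.2).iterate n ⟨hx.1, le_rfl⟩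
  refine (koenigsSeq_le hx n).trans ?_
  gcongr
  · linarith [hx.1]
  · nlinarith [log_pos one_lt_two, hx.1, hy.1]
  · exact hy.1.le

lemma tendsto_koenigsSeq {x : ℝ} (hx : x ∈ Ioo 2 4) :
    Tendsto (fun n => koenigsSeq n x) atTop (𝓝 (koenigs x)) :=
  tendsto_atTop_ciSup (monotone_koenigsSeq hx.1.le) (bddAbove_koenigsSeq hx)

lemma koenigs_twoPowHalf {x : ℝ} (hx : x ∈ Ioo 2 4) :
    koenigs (twoPowHalf x) = log 2 * koenigs x := by
  have hfx := mapsTo_twoPowHalf_Ioc hx.2 ⟨hx.1, le_rfl⟩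
  refine tendsto_nhds_unique (tendsto_koenigsSeq ⟨hfx.1, hfx.2.trans_lt hx.2⟩) ?_
  simp only [koenigsSeq_twoPowHalf]
  exact ((tendsto_koenigsSeq hx).comp (tendsto_add_atTop_nat 1)).const_mul _

lemma koenigs_pos {x : ℝ} (hx : x ∈ Ioo 2 4) : 0 < koenigs x :=
  calc 0 < koenigsSeq 0 x := by simpa [koenigsSeq] using hx.1
    _ ≤ koenigs x := le_ciSup (bddAbove_koenigsSeq hx) 0

lemma koenigs_add_sub_le {x y : ℝ} (hx : 2 ≤ x) (hy : y ∈ Ioo 2 4) (hxy : x ≤ y) :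
    koenigs x + (y - x) ≤ koenigs y := by
  rw [← le_sub_iff_add_le]
  refine ciSup_le fun n => le_sub_iff_add_le.mpr ((?_ : _ ≤ koenigsSeq n y).trans
    (le_ciSup (bddAbove_koenigsSeq hy) n))
  have hpow := pow_pos (log_pos one_lt_two) n
  have h := pow_mul_sub_le_iterate_sub (log_pos one_lt_two).le mapsTo_twoPowHalf_Ici
    (fun _ hx _ _ hxy => log_two_mul_sub_le hx hxy) hx (hx.trans hxy) hxy n
  rw [koenigsSeq, koenigsSeq, div_add' _ _ _ hpow.ne', div_le_div_iff_of_pos_right hpow]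
  linarith

lemma strictMonoOn_koenigs : StrictMonoOn koenigs (Ioo 2 4) := fun x hx y hy hxy => by
  linarith [koenigs_add_sub_le hx.1.le hy hxy.le]

lemma convexOn_koenigs : ConvexOn ℝ (Ioo 2 4) koenigs := by
  refine convexOn_ciSup (fun n => ?_) fun x hx => bddAbove_koenigsSeq hx
  have h := ((strictConvexOn_twoPowHalf.convexOn.iterate strictMono_twoPowHalf.monotone
    n).add_const (-2)).smul (inv_nonneg.mpr (pow_pos (log_pos one_lt_two) n).le)
  refine (h.subset (subset_univ _) (convex_Ioo 2 4)).congr fun x _ => ?_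
  simp [koenigsSeq, smul_eq_mul, div_eq_inv_mul, sub_eq_add_neg]

/-- There is a function `F`, continuous and strictly decreasing on `(2,4)`, satisfying Abel's
equation `F(2^(x/2)) = F(x) + 1` for all `x ∈ (2,4)`. -/
theorem abel_solution_on_Ioo_two_four :
    ∃ F : ℝ → ℝ, ContinuousOn F (Set.Ioo 2 4) ∧ StrictAntiOn F (Set.Ioo 2 4) ∧
      ∀ x ∈ Set.Ioo (2 : ℝ) 4, F ((2 : ℝ) ^ (x / 2)) = F x + 1 := by
  have hlog_pos : 0 < log 2 := log_pos one_lt_two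
  have hlog_lt_one : log 2 < 1 := by linarith [log_two_lt_d9]
  refine ⟨fun x => logb (log 2) (koenigs x),
    (convexOn_koenigs.continuousOn isOpen_Ioo).logb fun x hx => (koenigs_pos hx).ne',
    fun x hx y hy hxy => logb_lt_logb_of_base_lt_one hlog_pos hlog_lt_one (koenigs_pos hx)
      (strictMonoOn_koenigs hx hy hxy), fun x hx => ?_⟩
  show logb (log 2) (koenigs (twoPowHalf x)) = logb (log 2) (koenigs x) + 1
  rw [koenigs_twoPowHalf hx, logb_mul hlog_pos.ne' (koenigs_pos hx).ne',
    logb_self_eq_one_iff.mpr ⟨hlog_pos.ne', hlog_lt_one.ne, by linarith⟩, add_comm]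
end

section
/- There exists a function F : ℝ → ℝ that is continuous and strictly increasing on the open interval (−∞, 2), satisfies Abel's equation F(2^(x/2)) = F(x) + 1 for every x < 2, and satisfies F(1) = 0. Consequently, for the tetration sequence defined by t₀ = 1 and t_{n+1} = 2^(t_n/2), one has F(t_n) = n for every natural number n. -/
/-!
`(-∞, 0]` is a fundamental domain of `f x = 2 ^ (x / 2)` on `(-∞, 2)`: `f` maps it onto `(0, 1]`,
and every `x < 2` is carried into it by finitely many steps of the inverse `g y = 2 logb 2 y`,
because the orbit of `0` under `f` increases to the fixed point `2`. Put `F = f - 2` on the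
fundamental domain and `F x = F (g x) + 1` elsewhere. Near `0` this is `f - 2` on the left and
`y - 1` on the right, which agree at `0`; continuity and strict monotonicity then spread along `g`
by induction on the number of steps needed to reach `(-∞, 0]`.
-/

open Real Set Filter Topology Function

theorem tendsto_iterate_of_lt_apply {α : Type*} [ConditionallyCompleteLinearOrder α]
    [TopologicalSpace α] [OrderTopology α] {f : α → α} (hf : Continuous f) {a b : α}
    (hlt : ∀ x < b, x < f x) (hmaps : MapsTo f (Iio b) (Iio b)) (ha : a < b) :
    Tendsto (fun n ↦ f^[n] a) atTop (𝓝 b) := by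
  have horbit_lt : ∀ n, f^[n] a < b := fun n ↦ hmaps.iterate n ha
  have hmono : Monotone (fun n ↦ f^[n] a) := monotone_nat_of_le_succ fun n ↦ by
    rw [iterate_succ_apply']
    exact (hlt _ (horbit_lt n)).le
  have hlim := tendsto_atTop_ciSup hmono ⟨b, forall_mem_range.2 fun n ↦ (horbit_lt n).le⟩
  obtain heq | hsup_lt := (ciSup_le fun n ↦ (horbit_lt n).le : ⨆ n, f^[n] a ≤ b).eq_or_lt
  · rwa [heq] at hlim
  · exact absurd (isFixedPt_of_tendsto_iterate hlim hf.continuousAt) (hlt _ hsup_lt).ne'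

noncomputable def sqrtTwoPow (x : ℝ) : ℝ := (2 : ℝ) ^ (x / 2)

noncomputable def logSqrtTwo (y : ℝ) : ℝ := 2 * logb 2 y

theorem sqrtTwoPow_pos (x : ℝ) : 0 < sqrtTwoPow x := rpow_pos_of_pos two_pos _

theorem sqrtTwoPow_zero : sqrtTwoPow 0 = 1 := by simp [sqrtTwoPow]

theorem sqrtTwoPow_two : sqrtTwoPow 2 = 2 := by simp [sqrtTwoPow]

theorem strictMono_sqrtTwoPow : StrictMono sqrtTwoPow := fun _ _ h ↦
  rpow_lt_rpow_of_exponent_lt one_lt_two (by linarith)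

theorem continuous_sqrtTwoPow : Continuous sqrtTwoPow :=
  continuous_const.rpow (continuous_id.div_const 2) fun _ ↦ Or.inl two_ne_zero

theorem mapsTo_sqrtTwoPow_Iio_two : MapsTo sqrtTwoPow (Iio 2) (Iio 2) := fun x hx ↦ by
  simpa [sqrtTwoPow_two] using strictMono_sqrtTwoPow hx

theorem lt_sqrtTwoPow {x : ℝ} (hx : x < 2) : x < sqrtTwoPow x := by
  have hlog_pos : 0 < log 2 := log_pos one_lt_two
  have hlog_lt : log 2 < 1 := log_two_lt_d9.trans (by norm_num)
  -- `f` lies above its tangent at the fixed point `2`, whose slope `log 2` is less than `1`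
  have htangent : 2 * (log 2 * (x / 2 - 1) + 1) ≤ sqrtTwoPow x := by
    have hexp : sqrtTwoPow x = 2 * exp (log 2 * (x / 2 - 1)) := by
      rw [sqrtTwoPow, rpow_def_of_pos two_pos, ← exp_log two_pos, ← exp_add, exp_log two_pos]
      ring_nf
    rw [hexp]
    gcongr
    exact add_one_le_exp _
  nlinarith

theorem logSqrtTwo_sqrtTwoPow (x : ℝ) : logSqrtTwo (sqrtTwoPow x) = x := by
  rw [sqrtTwoPow, logSqrtTwo, logb_rpow two_pos (by norm_num)]
  ring

theorem sqrtTwoPow_logSqrtTwo {y : ℝ} (hy : 0 < y) : sqrtTwoPow (logSqrtTwo y) = y := by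
  rw [sqrtTwoPow, logSqrtTwo, mul_div_cancel_left₀ _ two_ne_zero,
    rpow_logb two_pos (by norm_num) hy]

theorem logSqrtTwo_lt_logSqrtTwo {x y : ℝ} (hx : 0 < x) (hxy : x < y) :
    logSqrtTwo x < logSqrtTwo y :=
  mul_lt_mul_of_pos_left (logb_lt_logb one_lt_two hx hxy) two_pos

theorem logSqrtTwo_lt_two {y : ℝ} (hy : 0 < y) (hy2 : y < 2) : logSqrtTwo y < 2 := by
  simpa [logSqrtTwo] using logSqrtTwo_lt_logSqrtTwo hy hy2

theorem logSqrtTwo_nonpos {y : ℝ} (hy : 0 ≤ y) (hy1 : y ≤ 1) : logSqrtTwo y ≤ 0 :=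
  mul_nonpos_of_nonneg_of_nonpos zero_le_two (logb_nonpos one_lt_two hy hy1)

theorem continuousAt_logSqrtTwo {y : ℝ} (hy : y ≠ 0) : ContinuousAt logSqrtTwo y :=
  continuousAt_const.mul (continuousAt_logb hy)

theorem exists_iterate_logSqrtTwo_nonpos {x : ℝ} (hx : x < 2) : ∃ n, logSqrtTwo^[n] x ≤ 0 := by
  obtain ⟨m, hm⟩ := ((tendsto_iterate_of_lt_apply continuous_sqrtTwoPow (fun _ ↦ lt_sqrtTwoPow)
    mapsTo_sqrtTwoPow_Iio_two two_pos).eventually (eventually_gt_nhds hx)).exists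
  induction m generalizing x with
  | zero => exact ⟨0, hm.le⟩
  | succ m ih =>
    rcases le_or_gt x 0 with hx0 | hx0
    · exact ⟨0, hx0⟩
    have hgx : logSqrtTwo x < sqrtTwoPow^[m] 0 := by
      rw [iterate_succ_apply'] at hm
      simpa [logSqrtTwo_sqrtTwoPow] using logSqrtTwo_lt_logSqrtTwo hx0 hm
    obtain ⟨n, hn⟩ := ih (logSqrtTwo_lt_two hx0 hx) hgx
    exact ⟨n + 1, by rwa [iterate_succ_apply]⟩

-- `sInf ∅ = 0`: the index is `0` also when the orbit never reaches `(-∞, 0]` (only for `x ≥ 2`).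
noncomputable def descentIndex (x : ℝ) : ℕ := sInf {n | logSqrtTwo^[n] x ≤ 0}

noncomputable def abelFn (x : ℝ) : ℝ :=
  descentIndex x + sqrtTwoPow (logSqrtTwo^[descentIndex x] x) - 2

theorem descentIndex_eq_zero {x : ℝ} (hx : x ≤ 0) : descentIndex x = 0 :=
  Nat.sInf_eq_zero.2 (Or.inl hx)

theorem pos_of_descentIndex_ne_zero {x : ℝ} (h : descentIndex x ≠ 0) : 0 < x :=
  lt_of_not_ge fun hx ↦ h (descentIndex_eq_zero hx)

theorem nonpos_of_descentIndex_eq_zero {x : ℝ} (hx : x < 2) (h : descentIndex x = 0) : x ≤ 0 := by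
  have hmem : descentIndex x ∈ {n | logSqrtTwo^[n] x ≤ 0} :=
    Nat.sInf_mem (exists_iterate_logSqrtTwo_nonpos hx)
  rwa [h] at hmem

theorem descentIndex_sqrtTwoPow {x : ℝ} (hx : x < 2) :
    descentIndex (sqrtTwoPow x) = descentIndex x + 1 := by
  have hne : descentIndex (sqrtTwoPow x) ≠ 0 := fun h ↦
    (sqrtTwoPow_pos x).not_ge (nonpos_of_descentIndex_eq_zero (mapsTo_sqrtTwoPow_Iio_two hx) h)
  have hshift := Nat.sInf_add (p := fun m ↦ logSqrtTwo^[m] (sqrtTwoPow x) ≤ 0)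
    (Nat.one_le_iff_ne_zero.2 hne)
  simp only [iterate_succ_apply, logSqrtTwo_sqrtTwoPow] at hshift
  exact hshift.symm

theorem abelFn_sqrtTwoPow {x : ℝ} (hx : x < 2) : abelFn (sqrtTwoPow x) = abelFn x + 1 := by
  rw [abelFn, abelFn, descentIndex_sqrtTwoPow hx, iterate_succ_apply, logSqrtTwo_sqrtTwoPow]
  push_cast
  ring

theorem abelFn_of_nonpos {x : ℝ} (hx : x ≤ 0) : abelFn x = sqrtTwoPow x - 2 := by
  simp [abelFn, descentIndex_eq_zero hx]

theorem descentIndex_eq_descentIndex_logSqrtTwo_add_one {y : ℝ} (hy : 0 < y) (hy2 : y < 2) :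
    descentIndex y = descentIndex (logSqrtTwo y) + 1 := by
  conv_lhs => rw [← sqrtTwoPow_logSqrtTwo hy]
  exact descentIndex_sqrtTwoPow (logSqrtTwo_lt_two hy hy2)

theorem abelFn_eq_abelFn_logSqrtTwo_add_one {y : ℝ} (hy : 0 < y) (hy2 : y < 2) :
    abelFn y = abelFn (logSqrtTwo y) + 1 := by
  conv_lhs => rw [← sqrtTwoPow_logSqrtTwo hy]
  exact abelFn_sqrtTwoPow (logSqrtTwo_lt_two hy hy2)

theorem neg_two_lt_abelFn (x : ℝ) : -2 < abelFn x := by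
  have := sqrtTwoPow_pos (logSqrtTwo^[descentIndex x] x)
  have : (0 : ℝ) ≤ descentIndex x := Nat.cast_nonneg _
  unfold abelFn
  linarith

theorem abelFn_le_neg_one {x : ℝ} (hx : x ≤ 0) : abelFn x ≤ -1 := by
  have := strictMono_sqrtTwoPow.monotone hx
  rw [abelFn_of_nonpos hx]
  linarith [sqrtTwoPow_zero]

theorem abelFn_eqOn_Iio_one :
    EqOn abelFn (fun y ↦ if y ≤ 0 then sqrtTwoPow y - 2 else y - 1) (Iio 1) := by
  intro y hy
  rcases le_or_gt y 0 with hy0 | hy0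
  · simp [hy0, abelFn_of_nonpos hy0]
  · have hy1 : y < 1 := hy
    dsimp only
    rw [if_neg hy0.not_ge, abelFn_eq_abelFn_logSqrtTwo_add_one hy0 (by linarith),
      abelFn_of_nonpos (logSqrtTwo_nonpos hy0.le hy1.le), sqrtTwoPow_logSqrtTwo hy0]
    ring

theorem continuousAt_abelFn_of_lt_one {x : ℝ} (hx : x < 1) : ContinuousAt abelFn x := by
  have hglued : Continuous fun y : ℝ ↦ if y ≤ 0 then sqrtTwoPow y - 2 else y - 1 :=
    Continuous.if_le (continuous_sqrtTwoPow.sub continuous_const)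
      (continuous_id.sub continuous_const) continuous_id continuous_const
      fun y hy ↦ by simp [show y = 0 from hy, sqrtTwoPow_zero]; norm_num
  exact hglued.continuousAt.congr (abelFn_eqOn_Iio_one.eventuallyEq_of_mem (Iio_mem_nhds hx)).symm

theorem continuousAt_abelFn {x : ℝ} (hx : x < 2) : ContinuousAt abelFn x := by
  obtain ⟨n, hn⟩ : ∃ n, descentIndex x = n := ⟨_, rfl⟩
  induction n generalizing x with
  | zero =>
    exact continuousAt_abelFn_of_lt_one ((nonpos_of_descentIndex_eq_zero hx hn).trans_lt one_pos)
  | succ n ih =>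
    have hx0 : 0 < x := pos_of_descentIndex_ne_zero (by omega)
    have hg : ContinuousAt (fun y ↦ abelFn (logSqrtTwo y) + 1) x :=
      ((ih (logSqrtTwo_lt_two hx0 hx) (by
        have := descentIndex_eq_descentIndex_logSqrtTwo_add_one hx0 hx; omega)).comp
        (continuousAt_logSqrtTwo hx0.ne')).add continuousAt_const
    exact hg.congr (eventuallyEq_of_mem (Ioo_mem_nhds hx0 hx) fun y hy ↦
      (abelFn_eq_abelFn_logSqrtTwo_add_one hy.1 hy.2).symm)

theorem strictMonoOn_abelFn : StrictMonoOn abelFn (Iio 2) := by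
  suffices ∀ n, ∀ x y, x < y → y < 2 → descentIndex y = n → abelFn x < abelFn y from
    fun x _ y hy hxy ↦ this _ x y hxy hy rfl
  intro n
  induction n with
  | zero =>
    intro x y hxy hy hn
    have hy0 := nonpos_of_descentIndex_eq_zero hy hn
    rw [abelFn_of_nonpos hy0, abelFn_of_nonpos (hxy.le.trans hy0)]
    linarith [strictMono_sqrtTwoPow hxy]
  | succ n ih =>
    intro x y hxy hy hn
    have hy0 : 0 < y := pos_of_descentIndex_ne_zero (by omega)
    rw [abelFn_eq_abelFn_logSqrtTwo_add_one hy0 hy]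
    rcases le_or_gt x 0 with hx0 | hx0
    · linarith [abelFn_le_neg_one hx0, neg_two_lt_abelFn (logSqrtTwo y)]
    · rw [abelFn_eq_abelFn_logSqrtTwo_add_one hx0 (hxy.trans hy)]
      have := descentIndex_eq_descentIndex_logSqrtTwo_add_one hy0 hy
      linarith [ih _ _ (logSqrtTwo_lt_logSqrtTwo hx0 hxy) (logSqrtTwo_lt_two hy0 hy) (by omega)]

theorem abelFn_one : abelFn 1 = 0 := by
  rw [← sqrtTwoPow_zero, abelFn_sqrtTwoPow two_pos, abelFn_of_nonpos le_rfl, sqrtTwoPow_zero]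
  norm_num

theorem abelFn_iterate_sqrtTwoPow_one (n : ℕ) : abelFn (sqrtTwoPow^[n] 1) = n := by
  induction n with
  | zero => simpa using abelFn_one
  | succ n ih =>
    rw [iterate_succ_apply', abelFn_sqrtTwoPow (mapsTo_sqrtTwoPow_Iio_two.iterate n (show (1 : ℝ) ∈ Iio 2 by norm_num)),
      ih, Nat.cast_succ]

/-- There is a function `F`, continuous and strictly increasing on `(-∞, 2)`, satisfying Abel's
equation `F(2^(x/2)) = F(x) + 1` for all `x < 2` and `F(1) = 0`; consequently, for the tetration
sequence `t₀ = 1`, `t_{n+1} = 2^(t_n/2)`, one has `F(t_n) = n` for all `n : ℕ`. -/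
theorem abel_solution_on_Iio_two_with_intercept_one :
    ∃ F : ℝ → ℝ, ContinuousOn F (Set.Iio 2) ∧ StrictMonoOn F (Set.Iio 2) ∧
      (∀ x : ℝ, x < 2 → F ((2 : ℝ) ^ (x / 2)) = F x + 1) ∧ F 1 = 0 ∧
      ∀ n : ℕ, F ((fun t : ℝ => (2 : ℝ) ^ (t / 2))^[n] 1) = n :=
  ⟨abelFn, fun _ hx ↦ (continuousAt_abelFn hx).continuousWithinAt, strictMonoOn_abelFn,
    fun _ hx ↦ abelFn_sqrtTwoPow hx, abelFn_one, abelFn_iterate_sqrtTwoPow_one⟩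
end

section
/- There exists a function h : ℝ → ℝ that is continuous and strictly increasing on (−∞, 2), maps (−∞, 2) into (−∞, 2), satisfies h(h(x)) = 2^(x/2) for every x < 2, and satisfies 1 < h(1) < √2. (Thus f(x) = 2^(x/2) has a half-iterate on (−∞,2), and the half-iterate of √2-tetration at 1 lies strictly between 1 and √2.) -/
open Real Set Filter Topology

namespace HalfIter

noncomputable def E (x : ℝ) : ℝ := (2:ℝ) ^ (x/2)
noncomputable def G (y : ℝ) : ℝ := 2 * Real.log y / Real.log 2
noncomputable def h0 (x : ℝ) : ℝ := if x ≤ -1 then -1 - 1/x else E (-1/(x+1))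
noncomputable def T (n : ℕ) : ℝ := E^[n] 0

lemma E_pos (x : ℝ) : 0 < E x := Real.rpow_pos_of_pos two_pos _

lemma E_lt_E {x y : ℝ} (h : x < y) : E x < E y :=
  Real.rpow_lt_rpow_left_iff one_lt_two |>.2 (by linarith)

lemma E_le_E {x y : ℝ} (h : x ≤ y) : E x ≤ E y :=
  Real.rpow_le_rpow_left_iff one_lt_two |>.2 (by linarith)

lemma E_strictMono : StrictMono E := fun _ _ h => E_lt_E h

lemma E_two : E 2 = 2 := by simp [E]

lemma E_zero : E 0 = 1 := by simp [E]

lemma E_lt_two {x : ℝ} (h : x < 2) : E x < 2 := by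
  have := E_lt_E h; rwa [E_two] at this

lemma log2_ne : Real.log 2 ≠ 0 := ne_of_gt (Real.log_pos one_lt_two)

lemma G_E (x : ℝ) : G (E x) = x := by
  simp only [G, E, Real.log_rpow two_pos]
  field_simp

lemma E_G {y : ℝ} (hy : 0 < y) : E (G y) = y := by
  rw [E, G, Real.rpow_def_of_pos two_pos]
  rw [show Real.log 2 * (2 * Real.log y / Real.log 2 / 2) = Real.log y * (Real.log 2 / Real.log 2) by ring,
    div_self log2_ne, mul_one, Real.exp_log hy]

lemma G_mono {x y : ℝ} (hx : 0 < x) (h : x ≤ y) : G x ≤ G y := by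
  have : Real.log x ≤ Real.log y := Real.log_le_log hx h
  have h2 : (0:ℝ) < Real.log 2 := Real.log_pos one_lt_two
  unfold G; gcongr

lemma G_lt_G {x y : ℝ} (hx : 0 < x) (h : x < y) : G x < G y := by
  have : Real.log x < Real.log y := Real.log_lt_log hx h
  have h2 : (0:ℝ) < Real.log 2 := Real.log_pos one_lt_two
  unfold G
  rw [div_lt_div_iff_of_pos_right h2]
  linarith

lemma lt_E {x : ℝ} (h : x < 2) : x < E x := by
  have hc : E x = 2 * Real.exp (Real.log 2 / 2 * (x - 2)) := by
    rw [E, Real.rpow_def_of_pos two_pos,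
      show (2:ℝ) * Real.exp (Real.log 2 / 2 * (x-2)) =
        Real.exp (Real.log 2 + Real.log 2/2*(x-2)) by rw [Real.exp_add, Real.exp_log two_pos]]
    congr 1
    ring
  have hl2 : Real.log 2 < 1 := by
    have := Real.log_two_lt_d9
    linarith
  have hl2' : (0:ℝ) < Real.log 2 := Real.log_pos one_lt_two
  have hs : Real.log 2 / 2 * (x - 2) ≠ 0 := by
    have : x - 2 ≠ 0 := by linarith
    positivity
  have hexp := Real.add_one_lt_exp hs
  nlinarith [hexp]


lemma E_cont : Continuous E := by
  have : E = fun x => Real.exp (Real.log 2 * (x/2)) :=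
    funext fun x => Real.rpow_def_of_pos two_pos _
  rw [this]
  fun_prop


-- iterate lemmas
lemma iter_lt_two {a : ℝ} (ha : a < 2) : ∀ n, E^[n] a < 2 := by
  intro n; induction n with
  | zero => simpa
  | succ n ih => rw [Function.iterate_succ_apply']; exact E_lt_two ih

lemma iter_mono {a : ℝ} (ha : a < 2) : Monotone (fun n => E^[n] a) := by
  apply monotone_nat_of_le_succ
  intro n
  rw [Function.iterate_succ_apply']
  exact (lt_E (iter_lt_two ha n)).le

lemma tendsto_iter {a : ℝ} (ha : a < 2) :
    Tendsto (fun n => E^[n] a) atTop (𝓝 2) := by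
  have hbdd : BddAbove (Set.range fun n => E^[n] a) :=
    ⟨2, by rintro _ ⟨n, rfl⟩; exact (iter_lt_two ha n).le⟩
  have htend := tendsto_atTop_ciSup (iter_mono ha) hbdd
  set L := ⨆ n, E^[n] a with hL
  have hL2 : L ≤ 2 := ciSup_le fun n => (iter_lt_two ha n).le
  have h1 : Tendsto (fun n => E^[n+1] a) atTop (𝓝 L) :=
    htend.comp (tendsto_add_atTop_nat 1)
  have h2 : Tendsto (fun n => E (E^[n] a)) atTop (𝓝 (E L)) :=
    (E_cont.tendsto L).comp htend
  have hEL : E L = L := by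
    apply tendsto_nhds_unique _ h1
    simpa [Function.iterate_succ_apply'] using h2
  have : L = 2 := by
    rcases lt_or_eq_of_le hL2 with h | h
    · exact absurd hEL (ne_of_gt (lt_E h))
    · exact h
  rwa [this] at htend

lemma T_succ (n : ℕ) : T (n+1) = E (T n) := Function.iterate_succ_apply' E n 0

lemma T_zero : T 0 = 0 := rfl

lemma T_one : T 1 = 1 := by rw [T_succ, T_zero, E_zero]

lemma T_lt_two (n : ℕ) : T n < 2 := iter_lt_two (by norm_num) n

lemma T_nonneg (n : ℕ) : 0 ≤ T n := iter_mono (by norm_num) (Nat.zero_le n)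

lemma one_le_T_succ (n : ℕ) : 1 ≤ T (n+1) := by
  rw [T_succ, ← E_zero]; exact E_le_E (T_nonneg n)

lemma good {x : ℝ} (hx : x < 2) : ∃ n, x ≤ T n := by
  have h := (tendsto_iter (by norm_num : (0:ℝ) < 2)).eventually (lt_mem_nhds hx)
  obtain ⟨n, hn⟩ := h.exists
  exact ⟨n, hn.le⟩

-- h0 lemmas
lemma h0_gt_neg_one {x : ℝ} (hx : x ≤ 0) : -1 < h0 x := by
  unfold h0
  split_ifs with h
  · have hx0 : x < 0 := lt_of_le_of_lt h (by norm_num)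
    have h1 : 0 < -1/x := div_pos_of_neg_of_neg (by norm_num) hx0
    have e : -1/x = -(1/x) := by ring
    linarith
  · have := E_pos (-1/(x+1)); linarith

lemma h0_le {x : ℝ} (hx : x ≤ 0) : h0 x ≤ E (-1) := by
  unfold h0
  split_ifs with h
  · have h1 : 0 < E (-1) := E_pos _
    have h2 : -1 - 1/x ≤ 0 := by
      have hx0 : x < 0 := lt_of_le_of_lt h (by norm_num)
      have : -1 ≤ 1/x ∨ True := Or.inr trivial
      have : 1/x ≥ -1 := by
        rw [ge_iff_le, le_div_iff_of_neg hx0]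
        linarith
      linarith
    linarith
  · apply E_le_E
    push_neg at h
    have hx1 : 0 < x + 1 := by linarith
    rw [div_le_iff₀ hx1]
    linarith

lemma h0_nonpos_of_le {x : ℝ} (hx : x ≤ -1) : h0 x ≤ 0 := by
  rw [h0, if_pos hx]
  have hx0 : x < 0 := lt_of_le_of_lt hx (by norm_num)
  have : 1/x ≥ -1 := by
    rw [ge_iff_le, le_div_iff_of_neg hx0]; linarith
  linarith

lemma h0_strictMonoOn : StrictMonoOn h0 (Iic 0) := by
  intro x hx y hy hxy
  simp only [mem_Iic] at hx hy
  by_cases h1 : y ≤ -1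
  · rw [h0, if_pos (hxy.le.trans h1), h0, if_pos h1]
    have hx0 : x < 0 := lt_of_lt_of_le hxy (h1.trans (by norm_num))
    have hy0 : y < 0 := lt_of_le_of_lt h1 (by norm_num)
    have : 1/y < 1/x := one_div_lt_one_div_of_neg_of_lt hy0 hxy
    linarith
  · push_neg at h1
    by_cases h2 : x ≤ -1
    · rw [h0, if_pos h2, h0, if_neg (not_le.2 h1)]
      have := h0_nonpos_of_le h2
      rw [h0, if_pos h2] at this
      have := E_pos (-1/(y+1))
      linarith
    · push_neg at h2
      rw [h0, if_neg (not_le.2 h2), h0, if_neg (not_le.2 h1)]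
      apply E_lt_E
      have hx1 : 0 < x + 1 := by linarith
      have hy1 : 0 < y + 1 := by linarith
      have : 1/(y+1) < 1/(x+1) := by
        apply one_div_lt_one_div_of_lt hx1 (by linarith)
      have e1 : -1/(x+1) = -(1/(x+1)) := by ring
      have e2 : -1/(y+1) = -(1/(y+1)) := by ring
      rw [e1, e2]
      linarith


open scoped Classical in
noncomputable def hh (x : ℝ) : ℝ :=
  if hx : ∃ n, x ≤ T n then E^[Nat.find hx] (h0 (G^[Nat.find hx] x)) else 0

lemma hh_nonpos {x : ℝ} (hx : x ≤ 0) : hh x = h0 x := by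
  have hex : ∃ n, x ≤ T n := ⟨0, by simpa [T_zero] using hx⟩
  simp only [hh]
  rw [dif_pos hex]
  have h0' : Nat.find hex = 0 := (Nat.find_eq_zero hex).2 (by simpa [T_zero] using hx)
  rw [h0']
  simp

lemma hh_step {x : ℝ} (hx0 : 0 < x) (hex : ∃ n, x ≤ T n) : hh x = E (hh (G x)) := by
  have hspec := Nat.find_spec hex
  have hn0 : Nat.find hex ≠ 0 := by
    intro h
    rw [h, T_zero] at hspec
    linarith
  rcases Nat.exists_eq_succ_of_ne_zero hn0 with ⟨m, hm⟩
  have hGx_le : G x ≤ T m := by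
    rw [hm] at hspec
    have h1 : x ≤ T (m+1) := hspec
    rw [T_succ] at h1
    have := G_mono hx0 h1
    rwa [G_E] at this
  have hexG : ∃ k, G x ≤ T k := ⟨m, hGx_le⟩
  have hfind : Nat.find hexG = m := by
    apply le_antisymm (Nat.find_le hGx_le)
    by_contra hcon
    push_neg at hcon
    have hk := Nat.find_spec hexG
    have hx_le : x ≤ T (Nat.find hexG + 1) := by
      rw [T_succ]
      calc x = E (G x) := (E_G hx0).symm
      _ ≤ E (T (Nat.find hexG)) := E_le_E hk
    have h2 := Nat.find_min' hex hx_le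
    omega
  simp only [hh]
  rw [dif_pos hex, dif_pos hexG, hfind, hm,
    Function.iterate_succ_apply G, Function.iterate_succ_apply' E]

lemma E_neg_one_lt_one : E (-1) < 1 := by
  have := E_lt_E (show (-1:ℝ) < 0 by norm_num)
  rwa [E_zero] at this

lemma hh_lt_two : ∀ n, ∀ x, x ≤ T n → hh x < 2 := by
  intro n
  induction n with
  | zero =>
    intro x hx
    rw [T_zero] at hx
    rw [hh_nonpos hx]
    have := h0_le hx
    have h2 : E (-1) < 2 := E_lt_two (by norm_num)
    linarith
  | succ n ih =>
    intro x hx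
    by_cases hx0 : x ≤ 0
    · rw [hh_nonpos hx0]
      have := h0_le hx0
      have h2 : E (-1) < 2 := E_lt_two (by norm_num)
      linarith
    · push_neg at hx0
      rw [hh_step hx0 ⟨n+1, hx⟩]
      apply E_lt_two
      apply ih
      rw [T_succ] at hx
      have := G_mono hx0 hx
      rwa [G_E] at this

lemma hh_gt_neg_one (x : ℝ) : -1 < hh x := by
  by_cases hex : ∃ n, x ≤ T n
  · by_cases hx0 : x ≤ 0
    · rw [hh_nonpos hx0]; exact h0_gt_neg_one hx0
    · push_neg at hx0
      rw [hh_step hx0 hex]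
      have := E_pos (hh (G x))
      linarith
  · simp only [hh]; rw [dif_neg hex]; norm_num

lemma hh_comp : ∀ n, ∀ x, x ≤ T n → hh (hh x) = E x := by
  intro n
  induction n with
  | zero =>
    intro x hx
    rw [T_zero] at hx
    rw [hh_nonpos hx]
    by_cases h1 : x ≤ -1
    · have hle : h0 x ≤ 0 := h0_nonpos_of_le h1
      rw [hh_nonpos hle]
      have hgt : -1 < h0 x := h0_gt_neg_one hx
      have hval : h0 x = -1 - 1/x := by rw [h0, if_pos h1]
      rw [h0, if_neg (not_le.2 hgt), hval]
      have hx0 : x < 0 := lt_of_le_of_lt h1 (by norm_num)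
      have hxne : x ≠ 0 := ne_of_lt hx0
      have e : (-1:ℝ)/((-1 - 1/x) + 1) = x := by
        rw [show (-1 - 1/x) + 1 = -(1/x) by ring, div_neg, neg_div, neg_neg, one_div_one_div]
      rw [e]
    · push_neg at h1
      rw [h0, if_neg (not_le.2 h1)]
      have hx1 : 0 < x + 1 := by linarith
      have harg : -1/(x+1) ≤ -1 := by
        rw [div_le_iff₀ hx1]; linarith
      have hy_pos : 0 < E (-1/(x+1)) := E_pos _
      have hy_le : E (-1/(x+1)) ≤ T 1 := by
        rw [T_one]
        calc E (-1/(x+1)) ≤ E (-1) := E_le_E harg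
        _ ≤ 1 := E_neg_one_lt_one.le
      rw [hh_step hy_pos ⟨1, hy_le⟩, G_E]
      rw [hh_nonpos (harg.trans (by norm_num))]
      rw [h0, if_pos harg]
      have hne : x + 1 ≠ 0 := ne_of_gt hx1
      rw [show (1:ℝ)/(-1/(x+1)) = -(x+1) by field_simp]
      ring
  | succ n ih =>
    intro x hx
    by_cases hxn : x ≤ T n
    · exact ih x hxn
    · push_neg at hxn
      have hx0 : 0 < x := lt_of_le_of_lt (T_nonneg n) hxn
      rw [hh_step hx0 ⟨n+1, hx⟩]
      have hGx : G x ≤ T n := by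
        rw [T_succ] at hx
        have := G_mono hx0 hx
        rwa [G_E] at this
      have hw : hh (G x) < 2 := hh_lt_two n _ hGx
      have hEw : 0 < E (hh (G x)) := E_pos _
      rw [hh_step hEw (good (E_lt_two hw)), G_E]
      rw [ih _ hGx, E_G hx0]

lemma hh_zero : hh 0 = E (-1) := by
  rw [hh_nonpos le_rfl, h0, if_neg (by norm_num)]
  norm_num

lemma hh_mono : ∀ n, ∀ x y : ℝ, x < y → y ≤ T n → hh x < hh y := by
  intro n
  induction n with
  | zero =>
    intro x y hxy hy
    rw [T_zero] at hy
    rw [hh_nonpos (hxy.le.trans hy), hh_nonpos hy]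
    exact h0_strictMonoOn (mem_Iic.2 (hxy.le.trans hy)) (mem_Iic.2 hy) hxy
  | succ n ih =>
    intro x y hxy hy
    by_cases hyn : y ≤ T n
    · exact ih x y hxy hyn
    · push_neg at hyn
      have hy0 : 0 < y := lt_of_le_of_lt (T_nonneg n) hyn
      have hGy : G y ≤ T n := by
        rw [T_succ] at hy
        have := G_mono hy0 hy
        rwa [G_E] at this
      rw [hh_step hy0 ⟨n+1, hy⟩]
      by_cases hxn : T n < x
      · have hx0 : 0 < x := lt_of_le_of_lt (T_nonneg n) hxn
        rw [hh_step hx0 ⟨n+1, hxy.le.trans hy⟩]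
        exact E_lt_E (ih _ _ (G_lt_G hx0 hxy) hGy)
      · push_neg at hxn
        have key : hh (T n) < E (hh (G y)) := by
          cases n with
          | zero =>
            rw [T_zero, hh_zero]
            exact E_lt_E (hh_gt_neg_one (G y))
          | succ m =>
            have hTpos : 0 < T (m+1) := lt_of_lt_of_le one_pos (one_le_T_succ m)
            rw [hh_step hTpos ⟨m+1, le_rfl⟩]
            apply E_lt_E
            have hGT : G (T (m+1)) = T m := by rw [T_succ, G_E]
            rw [hGT]
            apply ih
            · rw [← hGT]
              exact G_lt_G hTpos hyn
            · exact hGy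
        rcases eq_or_lt_of_le hxn with h | h
        · rw [h]; exact key
        · exact (ih x (T n) h le_rfl).trans key

noncomputable def U (n : ℕ) : ℝ := E^[n] (E (-1))

lemma U_zero : U 0 = E (-1) := rfl
lemma E_neg_one_lt_two : E (-1) < 2 := E_lt_two (by norm_num)
lemma U_succ (n : ℕ) : U (n+1) = E (U n) := Function.iterate_succ_apply' E n _
lemma U_lt_two (n : ℕ) : U n < 2 := iter_lt_two E_neg_one_lt_two n
lemma U_ge (n : ℕ) : E (-1) ≤ U n := iter_mono E_neg_one_lt_two (Nat.zero_le n)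

lemma hh_surj : ∀ n, ∀ y : ℝ, -1 < y → y ≤ U n → ∃ x, x ≤ T n ∧ hh x = y := by
  intro n
  induction n with
  | zero =>
    intro y hy1 hy2
    rw [U_zero] at hy2
    by_cases hy0 : y ≤ 0
    · have hy1' : 0 < y + 1 := by linarith
      refine ⟨-1/(y+1), ?_, ?_⟩
      · rw [T_zero]
        have : -1/(y+1) ≤ -1 := by rw [div_le_iff₀ hy1']; linarith
        linarith
      · have hle : -1/(y+1) ≤ -1 := by rw [div_le_iff₀ hy1']; linarith
        rw [hh_nonpos (hle.trans (by norm_num)), h0, if_pos hle]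
        have hne : y + 1 ≠ 0 := ne_of_gt hy1'
        rw [show (1:ℝ)/(-1/(y+1)) = -(y+1) by field_simp]
        ring
    · push_neg at hy0
      have hGy : G y ≤ -1 := by
        have := G_mono hy0 hy2
        rwa [G_E] at this
      have hGy0 : G y < 0 := lt_of_le_of_lt hGy (by norm_num)
      set x := -1 - 1/(G y) with hxdef
      have hx_gt : -1 < x := by
        have : 0 < -1/(G y) := div_pos_of_neg_of_neg (by norm_num) hGy0
        have e : -1/(G y) = -(1/(G y)) := by ring
        rw [hxdef]; linarith
      have hx_le : x ≤ 0 := by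
        have h1 : (1:ℝ) ≤ -(G y) := by linarith
        have : 1/(-(G y)) ≤ 1 := by
          rw [div_le_one (by linarith)]; linarith
        have e : 1/(-(G y)) = -(1/(G y)) := by
          rw [one_div_neg_eq_neg_one_div]
        rw [hxdef]; rw [e] at this; linarith
      refine ⟨x, by rw [T_zero]; exact hx_le, ?_⟩
      rw [hh_nonpos hx_le, h0, if_neg (not_le.2 hx_gt)]
      have hGyne : G y ≠ 0 := ne_of_lt hGy0
      have e1 : x + 1 = -1/(G y) := by rw [hxdef]; ring
      have e2 : (-1:ℝ)/(-1/(G y)) = G y := by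
        rw [show (-1:ℝ)/(G y) = -(1/(G y)) by ring, div_neg, neg_div, neg_neg, one_div_one_div]
      rw [e1, e2, E_G hy0]
  | succ n ih =>
    intro y hy1 hy2
    by_cases hyn : y ≤ U n
    · obtain ⟨x, hx1, hx2⟩ := ih y hy1 hyn
      refine ⟨x, hx1.trans ?_, hx2⟩
      rw [T_succ]
      exact (lt_E (T_lt_two n)).le
    · push_neg at hyn
      have hy0 : 0 < y := (lt_of_lt_of_le (E_pos (-1)) (U_ge n)).trans hyn
      have hGy_le : G y ≤ U n := by
        rw [U_succ] at hy2
        have := G_mono hy0 hy2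
        rwa [G_E] at this
      have hGy_gt : -1 < G y := by
        have h1 : E (-1) < y := lt_of_le_of_lt (U_ge n) hyn
        have := G_lt_G (E_pos (-1)) h1
        rwa [G_E] at this
      obtain ⟨x', hx1, hx2⟩ := ih (G y) hGy_gt hGy_le
      refine ⟨E x', ?_, ?_⟩
      · rw [T_succ]; exact E_le_E hx1
      · have hEx : 0 < E x' := E_pos x'
        have hEx2 : E x' ≤ T (n+1) := by rw [T_succ]; exact E_le_E hx1
        rw [hh_step hEx ⟨n+1, hEx2⟩, G_E, hx2, E_G hy0]


lemma hh_strictMonoOn : StrictMonoOn hh (Iio 2) := by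
  intro x hx y hy hxy
  obtain ⟨n, hn⟩ := good (mem_Iio.1 hy)
  exact hh_mono n x y hxy hn

lemma hh_mapsTo : MapsTo hh (Iio 2) (Iio 2) := by
  intro x hx
  obtain ⟨n, hn⟩ := good (mem_Iio.1 hx)
  exact mem_Iio.2 (hh_lt_two n x hn)

lemma hh_surjOn : SurjOn hh (Iio 2) (Ioo (-1) 2) := by
  intro y hy
  obtain ⟨hy1, hy2⟩ := hy
  have h := (tendsto_iter E_neg_one_lt_two).eventually (lt_mem_nhds hy2)
  obtain ⟨n, hn⟩ := h.exists
  obtain ⟨x, hx1, hx2⟩ := hh_surj n y hy1 hn.le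
  exact ⟨x, mem_Iio.2 (lt_of_le_of_lt hx1 (T_lt_two n)), hx2⟩

lemma hh_contOn : ContinuousOn hh (Iio 2) := by
  intro a ha
  apply ContinuousAt.continuousWithinAt
  apply hh_strictMonoOn.continuousAt_of_image_mem_nhds (isOpen_Iio.mem_nhds ha)
  apply Filter.mem_of_superset (isOpen_Ioo.mem_nhds _) (hh_surjOn.mono subset_rfl subset_rfl)
  constructor
  · exact hh_gt_neg_one a
  · exact hh_mapsTo ha

lemma G_one : G 1 = 0 := by
  have := G_E 0
  rwa [E_zero] at this

lemma hh_one : hh 1 = E (E (-1)) := by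
  rw [hh_step one_pos ⟨1, T_one.ge⟩, G_one, hh_zero]

lemma hh_one_gt : 1 < hh 1 := by
  rw [hh_one]
  have h := E_lt_E (E_pos (-1))
  rwa [E_zero] at h

lemma hh_one_lt : hh 1 < Real.sqrt 2 := by
  rw [hh_one, Real.sqrt_eq_rpow]
  show E (E (-1)) < (2:ℝ) ^ ((1:ℝ)/2)
  rw [show E (E (-1)) = (2:ℝ) ^ (E (-1)/2) from rfl]
  apply Real.rpow_lt_rpow_left_iff one_lt_two |>.2
  have := E_neg_one_lt_one
  linarith


end HalfIter

/-- `f(x) = 2^(x/2)` has a half-iterate `h` on `(-∞, 2)`: `h` is continuous and strictly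
increasing on `(-∞,2)`, maps `(-∞,2)` into itself, satisfies `h(h(x)) = 2^(x/2)` for `x < 2`,
and `1 < h(1) < √2`. -/
theorem half_iterate_of_rpow_two_half_on_Iio_two :
    ∃ h : ℝ → ℝ, ContinuousOn h (Set.Iio 2) ∧ StrictMonoOn h (Set.Iio 2) ∧
      Set.MapsTo h (Set.Iio 2) (Set.Iio 2) ∧
      (∀ x : ℝ, x < 2 → h (h x) = (2 : ℝ) ^ (x / 2)) ∧
      1 < h 1 ∧ h 1 < Real.sqrt 2 := by
  refine ⟨HalfIter.hh, HalfIter.hh_contOn, HalfIter.hh_strictMonoOn, HalfIter.hh_mapsTo, ?_,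
    HalfIter.hh_one_gt, HalfIter.hh_one_lt⟩
  intro x hx
  obtain ⟨n, hn⟩ := HalfIter.good hx
  exact HalfIter.hh_comp n x hn
end

section
/- Let 0 < λ < 1 and let f(x) = λ·x·(1 − x). For every x with 0 < x < 1: the iterates f^[k](x) converge to 0 as k → ∞; the limit G(x) = lim_{k→∞} f^[k](x) / λ^k exists and is strictly positive; and the function G so defined satisfies Schröder's equation G(f(x)) = λ·G(x) for all x ∈ (0,1). -/
open Filter

/-- For `0 < λ < 1` and `f(x) = λ·x·(1−x)`: for each `x ∈ (0,1)` the iterates `f^[k](x)` tend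
to `0`; the Koenig limit `G(x) = lim f^[k](x)/λ^k` exists and is positive; and `G` satisfies
Schröder's equation `G(f(x)) = λ·G(x)` on `(0,1)`. -/
theorem logistic_koenig_linearizer (lam : ℝ) (h0 : 0 < lam) (h1 : lam < 1) :
    (∀ x : ℝ, 0 < x → x < 1 →
      Filter.Tendsto (fun k : ℕ => (fun t : ℝ => lam * t * (1 - t))^[k] x)
        Filter.atTop (nhds 0)) ∧
    ∃ G : ℝ → ℝ,
      (∀ x : ℝ, 0 < x → x < 1 →
        Filter.Tendsto (fun k : ℕ => (fun t : ℝ => lam * t * (1 - t))^[k] x / lam ^ k)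
          Filter.atTop (nhds (G x)) ∧ 0 < G x) ∧
      (∀ x : ℝ, 0 < x → x < 1 → G (lam * x * (1 - x)) = lam * G x) := by
  have hlam1 : (0:ℝ) < 1 - lam := by linarith
  set F : ℝ → ℝ := fun t : ℝ => lam * t * (1 - t) with hF
  have key : ∀ x : ℝ, 0 < x → x < 1 → ∀ k : ℕ,
      0 < F^[k] x ∧ F^[k] x ≤ lam ^ k * x := by
    intro x hx0 hx1 k
    induction k with
    | zero => simpa using hx0
    | succ k ih =>
      obtain ⟨hp, hle⟩ := ih
      have hpow : lam ^ k ≤ 1 := pow_le_one₀ h0.le h1.le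
      have hpowpos : (0:ℝ) < lam ^ k := pow_pos h0 k
      have hlt1 : F^[k] x < 1 := by nlinarith
      rw [Function.iterate_succ_apply']
      constructor
      · show 0 < lam * F^[k] x * (1 - F^[k] x)
        have : 0 < 1 - F^[k] x := by linarith
        positivity
      · show lam * F^[k] x * (1 - F^[k] x) ≤ lam ^ (k+1) * x
        have h2 : 1 - F^[k] x ≤ 1 := by linarith
        calc lam * F^[k] x * (1 - F^[k] x) ≤ lam * F^[k] x * 1 :=
              mul_le_mul_of_nonneg_left h2 (by positivity)
          _ = lam * F^[k] x := by ring
          _ ≤ lam * (lam ^ k * x) := mul_le_mul_of_nonneg_left hle h0.le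
          _ = lam ^ (k+1) * x := by ring
  have hlt1' : ∀ x, 0 < x → x < 1 → ∀ k, F^[k] x < 1 := by
    intro x hx0 hx1 k
    have h2 := (key x hx0 hx1 k).2
    have hpow : lam ^ k ≤ 1 := pow_le_one₀ h0.le h1.le
    have hpowpos : (0:ℝ) < lam ^ k := pow_pos h0 k
    nlinarith [(key x hx0 hx1 k).1]
  have htend0 : ∀ x, 0 < x → x < 1 →
      Tendsto (fun k : ℕ => F^[k] x) atTop (nhds 0) := by
    intro x hx0 hx1
    apply squeeze_zero (fun k => (key x hx0 hx1 k).1.le) (fun k => (key x hx0 hx1 k).2)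
    have := (tendsto_pow_atTop_nhds_zero_of_lt_one h0.le h1).mul_const x
    simpa using this
  have hrec : ∀ x : ℝ, ∀ k : ℕ,
      F^[k+1] x / lam ^ (k+1) = (F^[k] x / lam ^ k) * (1 - F^[k] x) := by
    intro x k
    rw [Function.iterate_succ_apply']
    have hpk : lam ^ k ≠ 0 := (pow_pos h0 k).ne'
    show lam * F^[k] x * (1 - F^[k] x) / lam ^ (k+1) = _
    field_simp
    ring
  have hanti : ∀ x, 0 < x → x < 1 → Antitone (fun k : ℕ => F^[k] x / lam ^ k) := by
    intro x hx0 hx1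
    apply antitone_nat_of_succ_le
    intro k
    have hy0 := (key x hx0 hx1 k).1
    have hy1 := hlt1' x hx0 hx1 k
    have hpk : (0:ℝ) < lam ^ k := pow_pos h0 k
    simp only [hrec x k]
    have h2 : 1 - F^[k] x ≤ 1 := by linarith
    have h3 : 0 ≤ F^[k] x / lam ^ k := by positivity
    nlinarith [mul_le_mul_of_nonneg_left h2 h3]
  have hbdd : ∀ x, 0 < x → x < 1 →
      BddBelow (Set.range fun k : ℕ => F^[k] x / lam ^ k) := by
    intro x hx0 hx1
    refine ⟨0, ?_⟩
    rintro y ⟨k, rfl⟩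
    exact (div_pos (key x hx0 hx1 k).1 (pow_pos h0 k)).le
  set G : ℝ → ℝ := fun x => ⨅ k : ℕ, F^[k] x / lam ^ k with hG
  have htendG : ∀ x, 0 < x → x < 1 →
      Tendsto (fun k : ℕ => F^[k] x / lam ^ k) atTop (nhds (G x)) := by
    intro x hx0 hx1
    exact tendsto_atTop_ciInf (hanti x hx0 hx1) (hbdd x hx0 hx1)
  have hGpos : ∀ x, 0 < x → x < 1 → 0 < G x := by
    intro x hx0 hx1
    obtain ⟨N, hN⟩ := exists_pow_lt_of_lt_one (show (0:ℝ) < (1 - lam)/2 by linarith) h1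
    have haN : 0 < F^[N] x / lam ^ N := div_pos (key x hx0 hx1 N).1 (pow_pos h0 N)
    have hsum : ∀ k, N ≤ k → (∑ j ∈ Finset.Ico N k, F^[j] x) ≤ 1/2 := by
      intro k hk
      have h1' : (∑ j ∈ Finset.Ico N k, F^[j] x) ≤ ∑ j ∈ Finset.Ico N k, lam ^ j := by
        apply Finset.sum_le_sum
        intro j _
        have := (key x hx0 hx1 j).2
        have hpj : (0:ℝ) < lam ^ j := pow_pos h0 j
        nlinarith
      have h2' : (∑ j ∈ Finset.Ico N k, lam ^ j) = (lam ^ N - lam ^ k) / (1 - lam) := by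
        rw [geom_sum_Ico h1.ne hk]
        rw [div_eq_div_iff (by linarith) (by linarith)]
        ring
      have h3' : (lam ^ N - lam ^ k) / (1 - lam) ≤ 1/2 := by
        rw [div_le_iff₀ hlam1]
        have := pow_pos h0 k
        nlinarith
      linarith
    -- lower bound by induction
    have hlb : ∀ k, N ≤ k →
        (F^[N] x / lam ^ N) * (1 - ∑ j ∈ Finset.Ico N k, F^[j] x) ≤ F^[k] x / lam ^ k := by
      intro k hk
      induction k, hk using Nat.le_induction with
      | base => simp
      | succ k hk ih =>
        rw [Finset.sum_Ico_succ_top hk, hrec x k]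
        have ht0 := (key x hx0 hx1 k).1
        have ht1 := hlt1' x hx0 hx1 k
        have hS0 : 0 ≤ ∑ j ∈ Finset.Ico N k, F^[j] x :=
          Finset.sum_nonneg fun j _ => (key x hx0 hx1 j).1.le
        have hmul := mul_le_mul_of_nonneg_right ih (by linarith : (0:ℝ) ≤ 1 - F^[k] x)
        nlinarith [mul_nonneg (mul_nonneg haN.le hS0) ht0.le]
    have hlb2 : ∀ᶠ k in atTop, (F^[N] x / lam ^ N) / 2 ≤ F^[k] x / lam ^ k := by
      filter_upwards [eventually_ge_atTop N] with k hk
      have := hlb k hk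
      have hs := hsum k hk
      nlinarith
    have := ge_of_tendsto (htendG x hx0 hx1) hlb2
    linarith [haN]
  refine ⟨htend0, G, fun x hx0 hx1 => ⟨htendG x hx0 hx1, hGpos x hx0 hx1⟩, ?_⟩
  intro x hx0 hx1
  have hfx0 : 0 < F x := by
    have := (key x hx0 hx1 1).1
    simpa using this
  have hfx1 : F x < 1 := by
    have := hlt1' x hx0 hx1 1
    simpa using this
  have h1t : Tendsto (fun k : ℕ => F^[k+1] x / lam ^ (k+1)) atTop (nhds (G x)) :=
    (htendG x hx0 hx1).comp (tendsto_add_atTop_nat 1)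
  have h2t : Tendsto (fun k : ℕ => lam * (F^[k+1] x / lam ^ (k+1))) atTop
      (nhds (lam * G x)) := h1t.const_mul lam
  have heq : (fun k : ℕ => F^[k] (F x) / lam ^ k)
      = fun k : ℕ => lam * (F^[k+1] x / lam ^ (k+1)) := by
    funext k
    rw [← Function.iterate_succ_apply]
    have hpk : lam ^ k ≠ 0 := (pow_pos h0 k).ne'
    rw [pow_succ]
    field_simp
  have h3t : Tendsto (fun k : ℕ => F^[k] (F x) / lam ^ k) atTop (nhds (lam * G x)) := by
    rw [heq]; exact h2t
  have h4t := htendG (F x) hfx0 hfx1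
  show G (F x) = lam * G x
  exact tendsto_nhds_unique h4t h3t
end

section
/- Let 1 < λ < 2 and let f(x) = λ·x·(1 − x), with μ = (λ − 1)/λ. For every x with 0 < x < 1, the iterates f^[k](x) converge to μ as k → ∞. -/
/-!
On `[0, 1]` the map takes values in `(0, λ/4] ⊆ (0, 1/2]`, and the identity
`f y - μ = (1 - λ y) (y - μ)` shows that on `[δ, 1/2]`, for any `0 < δ ≤ μ`, the map is a
contraction towards `μ` with factor `1 - λ δ < 1`. Taking `δ = min (f x) μ`, which keeps the
whole orbit of `f x` inside `[δ, 1/2]`, the iterates converge geometrically to `μ`.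
-/

open Filter Topology Set Function

theorem tendsto_iterate_of_dist_le_mul {α : Type*} [PseudoMetricSpace α] {g : α → α}
    {s : Set α} {m : α} {q : ℝ} (hs : MapsTo g s s) (hq0 : 0 ≤ q) (hq1 : q < 1)
    (hg : ∀ y ∈ s, dist (g y) m ≤ q * dist y m) {y : α} (hy : y ∈ s) :
    Tendsto (fun k => g^[k] y) atTop (𝓝 m) := by
  have hbound : ∀ k : ℕ, dist (g^[k] y) m ≤ q ^ k * dist y m := by
    intro k
    induction k with
    | zero => simp
    | succ k ih =>
      calc dist (g^[k + 1] y) m = dist (g (g^[k] y)) m := by rw [iterate_succ_apply']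
        _ ≤ q * dist (g^[k] y) m := hg _ (hs.iterate k hy)
        _ ≤ q * (q ^ k * dist y m) := by gcongr
        _ = q ^ (k + 1) * dist y m := by ring
  rw [tendsto_iff_dist_tendsto_zero]
  refine squeeze_zero (fun k => dist_nonneg) hbound ?_
  simpa using (tendsto_pow_atTop_nhds_zero_of_lt_one hq0 hq1).mul_const (dist y m)

def logistic (lam t : ℝ) : ℝ := lam * t * (1 - t)

section Logistic

variable {lam : ℝ}

theorem logistic_sub_fixedPoint (hlam : lam ≠ 0) (y : ℝ) :
    logistic lam y - (lam - 1) / lam = (1 - lam * y) * (y - (lam - 1) / lam) := by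
  unfold logistic
  field_simp
  ring

theorem logistic_pos (hlam : 0 < lam) {t : ℝ} (ht0 : 0 < t) (ht1 : t < 1) :
    0 < logistic lam t :=
  mul_pos (mul_pos hlam ht0) (sub_pos.mpr ht1)

theorem logistic_le_half (hlam0 : 0 ≤ lam) (hlam2 : lam ≤ 2) (t : ℝ) :
    logistic lam t ≤ 1 / 2 := by
  unfold logistic
  nlinarith [mul_nonneg hlam0 (sq_nonneg (t - 1 / 2))]

variable {δ : ℝ}

theorem mapsTo_logistic_Icc (h1 : 1 < lam) (h2 : lam ≤ 2) (hδ0 : 0 ≤ δ)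
    (hδ : δ ≤ (lam - 1) / lam) :
    MapsTo (logistic lam) (Icc δ (1 / 2)) (Icc δ (1 / 2)) := by
  intro y ⟨hδy, hy⟩
  refine ⟨?_, logistic_le_half (by linarith) h2 y⟩
  have hlam : 0 < lam := by linarith
  -- below `μ` the map moves points up; above `μ` it stays above `μ`
  rcases le_total y ((lam - 1) / lam) with hyμ | hyμ
  · have : lam * y ≤ lam - 1 := by rwa [le_div_iff₀' hlam] at hyμ
    calc δ ≤ y := hδy
      _ ≤ logistic lam y := by unfold logistic; nlinarith [hδ0.trans hδy]
  · have : 0 ≤ logistic lam y - (lam - 1) / lam := by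
      rw [logistic_sub_fixedPoint hlam.ne']
      exact mul_nonneg (by nlinarith) (sub_nonneg.mpr hyμ)
    linarith

theorem dist_logistic_le (hlam0 : 0 < lam) (hlam2 : lam ≤ 2) {y : ℝ} (hy : y ∈ Icc δ (1 / 2)) :
    dist (logistic lam y) ((lam - 1) / lam) ≤ (1 - lam * δ) * dist y ((lam - 1) / lam) := by
  rw [Real.dist_eq, Real.dist_eq, logistic_sub_fixedPoint hlam0.ne', abs_mul]
  gcongr
  rw [abs_of_nonneg (by nlinarith [hy.2])]
  nlinarith [hy.1]

end Logistic

/-- For `1 < λ < 2`, `f(x) = λ·x·(1−x)` and `μ = (λ−1)/λ`: for each `x ∈ (0,1)` the iterates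
`f^[k](x)` converge to `μ`. -/
theorem logistic_iterates_tendsto_mu (lam : ℝ) (h1 : 1 < lam) (h2 : lam < 2)
    (x : ℝ) (hx0 : 0 < x) (hx1 : x < 1) :
    Filter.Tendsto (fun k : ℕ => (fun t : ℝ => lam * t * (1 - t))^[k] x)
      Filter.atTop (nhds ((lam - 1) / lam)) := by
  change Tendsto (fun k => (logistic lam)^[k] x) atTop (𝓝 ((lam - 1) / lam))
  have hlam : 0 < lam := by linarith
  set δ := min (logistic lam x) ((lam - 1) / lam)
  have hδ0 : 0 < δ := lt_min (logistic_pos hlam hx0 hx1) (div_pos (by linarith) hlam)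
  have hlamδ : lam * δ ≤ lam - 1 := by
    rw [← le_div_iff₀' hlam]
    exact min_le_right _ _
  have horbit : Tendsto (fun k => (logistic lam)^[k] (logistic lam x)) atTop
      (𝓝 ((lam - 1) / lam)) :=
    tendsto_iterate_of_dist_le_mul (mapsTo_logistic_Icc h1 h2.le hδ0.le (min_le_right _ _))
      (by linarith) (by nlinarith) (fun y hy => dist_logistic_le hlam h2.le hy)
      ⟨min_le_left _ _, logistic_le_half hlam.le h2.le x⟩
  refine (tendsto_add_atTop_iff_nat 1).mp ?_
  simpa only [iterate_succ_apply] using horbit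
end

section
/- Let 1 < λ < 2, let f(x) = λ·x·(1 − x), and let μ = (λ − 1)/λ. The Koenig limit L = lim_{k→∞} (f^[k](1/2) − μ) / (2 − λ)^k exists (as a finite real number) and is nonzero. -/
/-- For `1 < λ < 2`, `f(x) = λ·x·(1−x)` and `μ = (λ−1)/λ`, the Koenig limit
`L = lim_{k→∞} (f^[k](1/2) − μ)/(2−λ)^k` exists and is nonzero. -/
theorem logistic_koenig_limit_at_half (lam : ℝ) (h1 : 1 < lam) (h2 : lam < 2) :
    ∃ L : ℝ, L ≠ 0 ∧
      Filter.Tendsto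
        (fun k : ℕ =>
          ((fun t : ℝ => lam * t * (1 - t))^[k] (1 / 2) - (lam - 1) / lam) / (2 - lam) ^ k)
        Filter.atTop (nhds L) := by
  have hlam0 : (0:ℝ) < lam := by linarith
  have hlamne : lam ≠ 0 := ne_of_gt hlam0
  set c : ℝ := 2 - lam with hc
  have hc0 : (0:ℝ) < c := by rw [hc]; linarith
  have hc1 : c < 1 := by rw [hc]; linarith
  have hcne : c ≠ 0 := ne_of_gt hc0
  set y : ℕ → ℝ := fun k => (fun t : ℝ => lam * t * (1 - t))^[k] (1/2) - (lam - 1)/lam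
    with hydef
  have hrec : ∀ k, y (k+1) = y k * (c - lam * y k) := by
    intro k
    have h := Function.iterate_succ_apply' (fun t : ℝ => lam * t * (1 - t)) k (1/2 : ℝ)
    simp only [hydef, h]
    set x := (fun t : ℝ => lam * t * (1 - t))^[k] (1/2 : ℝ) with hx
    show lam * x * (1 - x) - (lam-1)/lam = (x - (lam-1)/lam) * (c - lam * (x - (lam-1)/lam))
    rw [hc]; field_simp; ring
  have hy0 : y 0 = c / (2*lam) := by
    simp only [hydef, Function.iterate_zero, id_eq, hc]
    field_simp; ring
  have hbound : ∀ k, 0 < y k ∧ y k ≤ c/(2*lam) * c^k := by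
    intro k; induction k with
    | zero => rw [hy0]; exact ⟨by positivity, by simp⟩
    | succ k ih =>
      obtain ⟨hp, hb⟩ := ih
      have hck1 : c^k ≤ 1 := pow_le_one₀ hc0.le hc1.le
      have hckpos : (0:ℝ) < c^k := pow_pos hc0 k
      have hly : lam * y k ≤ c/2 * c^k := by
        have := mul_le_mul_of_nonneg_left hb hlam0.le
        calc lam * y k ≤ lam * (c/(2*lam) * c^k) := this
          _ = c/2 * c^k := by field_simp
      have hfac : c/2 ≤ c - lam * y k := by nlinarith
      have hfacpos : 0 < c - lam * y k := lt_of_lt_of_le (by positivity) hfac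
      refine ⟨by rw [hrec]; positivity, ?_⟩
      rw [hrec]
      have h1' : c - lam * y k ≤ c := by nlinarith [mul_pos hlam0 hp]
      calc y k * (c - lam * y k) ≤ y k * c := by nlinarith
        _ ≤ (c/(2*lam) * c^k) * c := by nlinarith
        _ = c/(2*lam) * c^(k+1) := by ring
  set a : ℕ → ℝ := fun k => y k / c^k with hadef
  have harec : ∀ k, a (k+1) = a k * (1 - lam * y k / c) := by
    intro k
    have hcp : (c:ℝ)^k ≠ 0 := pow_ne_zero _ hcne
    simp only [hadef, hrec, pow_succ]
    field_simp
  have hapos : ∀ k, 0 < a k := fun k => div_pos (hbound k).1 (pow_pos hc0 k)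
  have heps : ∀ k, 0 ≤ lam * y k / c ∧ lam * y k / c ≤ 1/2 * c^k := by
    intro k
    obtain ⟨hp, hb⟩ := hbound k
    constructor
    · positivity
    · rw [div_le_iff₀ hc0]
      have := mul_le_mul_of_nonneg_left hb hlam0.le
      calc lam * y k ≤ lam * (c/(2*lam) * c^k) := this
        _ = 1/2 * c^k * c := by field_simp
  have hanti : Antitone a := by
    apply antitone_nat_of_succ_le
    intro k
    rw [harec k]
    obtain ⟨he0, he1⟩ := heps k
    nlinarith [hapos k]
  -- lower bound via exp
  have hkey : ∀ k, a 0 * Real.exp (-(∑ j ∈ Finset.range k, c^j)) ≤ a k := by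
    intro k; induction k with
    | zero => simp
    | succ k ih =>
      rw [harec k, Finset.sum_range_succ]
      obtain ⟨he0, he1⟩ := heps k
      have hck1 : c^k ≤ 1 := pow_le_one₀ hc0.le hc1.le
      have hexp : Real.exp (-(c^k)) ≤ 1 - lam * y k / c := by
        set e := lam * y k / c with hedef
        have hineq : Real.exp (-(2*e)) ≤ 1 - e := by
          have hm1 : Real.exp (-(2*e)) * Real.exp (2*e) = 1 := by
            rw [← Real.exp_add]; simp
          have h1e : Real.exp (-(2*e)) * (2*e + 1) ≤ 1 := by
            calc Real.exp (-(2*e)) * (2*e + 1)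
                ≤ Real.exp (-(2*e)) * Real.exp (2*e) :=
                  mul_le_mul_of_nonneg_left (Real.add_one_le_exp (2*e)) (Real.exp_pos _).le
              _ = 1 := hm1
          have he12 : e ≤ 1/2 := le_trans he1 (by nlinarith)
          nlinarith [Real.exp_pos (-(2*e)), sq_nonneg e]
        calc Real.exp (-(c^k)) ≤ Real.exp (-(2*e)) := by
              apply Real.exp_le_exp.mpr; linarith
          _ ≤ 1 - e := hineq
      calc a 0 * Real.exp (-(∑ j ∈ Finset.range k, c^j + c^k))
          = (a 0 * Real.exp (-(∑ j ∈ Finset.range k, c^j))) * Real.exp (-(c^k)) := by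
            rw [mul_assoc, ← Real.exp_add, neg_add]
        _ ≤ a k * (1 - lam * y k / c) := by
            apply mul_le_mul ih hexp (Real.exp_pos _).le (hapos k).le
  set b : ℝ := a 0 * Real.exp (-(1/(1-c))) with hbdef
  have hbpos : 0 < b := mul_pos (hapos 0) (Real.exp_pos _)
  have hblb : ∀ k, b ≤ a k := by
    intro k
    refine le_trans ?_ (hkey k)
    rw [hbdef]
    apply mul_le_mul_of_nonneg_left _ (hapos 0).le
    apply Real.exp_le_exp.mpr
    rw [neg_le_neg_iff]
    have hsum : ∑ j ∈ Finset.range k, c^j = (1 - c^k)/(1-c) := by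
      rw [geom_sum_eq (ne_of_lt hc1)]
      rw [div_eq_div_iff (by linarith) (by linarith)]
      ring
    rw [hsum, div_le_div_iff₀ (by linarith) (by linarith)]
    nlinarith [pow_pos hc0 k]
  have hbdd : BddBelow (Set.range a) := ⟨b, by rintro x ⟨k, rfl⟩; exact hblb k⟩
  have htend : Filter.Tendsto a Filter.atTop (nhds (⨅ k, a k)) :=
    tendsto_atTop_ciInf hanti hbdd
  refine ⟨⨅ k, a k, ?_, htend⟩
  have hle : b ≤ ⨅ k, a k := le_ciInf hblb
  exact ne_of_gt (lt_of_lt_of_le hbpos hle)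
end

section
/- Let 0 < λ < 1 and let f(x) = λ·x·(1 − x). There exists a function h : ℝ → ℝ that is continuous and strictly increasing on the interval (0, 1/2], maps (0, 1/2] into (0, 1/2], and satisfies h(h(x)) = f(x) and f(x) < h(x) < x for every x ∈ (0, 1/2]. In particular f(1/2) = λ/4 < h(1/2) < 1/2. -/
/-!
On `[0, 1/2]` the logistic map `f` is semiconjugate to multiplication by `λ`: the Koenigs
function `G = lim f^[n] / λ^n` satisfies `G ∘ f = λ • G` and is a continuous increasing
bijection of `[0, 1/2]` onto `[0, G (1/2)]`, so `h = G⁻¹ ∘ (√λ • G)` is a half-iterate.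
The approximants `f^[n] / λ^n` decrease in `n`, and their increments over `[x, y]` shrink by
at most the factor `1 - (x + y) ∑ λ^k`. When `x + y < 1 - λ` this keeps `G` strictly
increasing, and the functional equation transports that to all of `[0, 1/2]`; at `x = 0` it
gives `u - G u ≤ u² / (1 - λ)`, hence uniform convergence.
-/

open Set Filter Topology Function

theorem StrictMonoOn.iterate {α : Type*} [Preorder α] {f : α → α} {s : Set α}
    (hf : StrictMonoOn f s) (hs : MapsTo f s s) (n : ℕ) : StrictMonoOn f^[n] s := by
  induction n with
  | zero => exact strictMonoOn_id
  | succ n ih => rw [iterate_succ]; exact ih.comp hf hs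

theorem continuousAt_invFunOn_Icc {g : ℝ → ℝ} {a b y : ℝ} (hab : a ≤ b)
    (hc : ContinuousOn g (Icc a b)) (hm : StrictMonoOn g (Icc a b)) (hy : y ∈ Ioo (g a) (g b)) :
    ContinuousAt (invFunOn g (Icc a b)) y := by
  have hinv : ∀ z ∈ Icc (g a) (g b), invFunOn g (Icc a b) z ∈ Icc a b ∧
      g (invFunOn g (Icc a b) z) = z := fun z hz =>
    ⟨invFunOn_mem (intermediate_value_Icc hab hc hz),
      invFunOn_eq (intermediate_value_Icc hab hc hz)⟩
  have hmono : StrictMonoOn (invFunOn g (Icc a b)) (Icc (g a) (g b)) := fun z hz w hw hzw =>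
    (hm.lt_iff_lt (hinv z hz).1 (hinv w hw).1).1 (by rwa [(hinv z hz).2, (hinv w hw).2])
  have hsurj : Icc a b ⊆ invFunOn g (Icc a b) '' Icc (g a) (g b) := fun x hx =>
    ⟨g x, ⟨hm.monotoneOn ⟨le_rfl, hab⟩ hx hx.1, hm.monotoneOn hx ⟨hab, le_rfl⟩ hx.2⟩,
      hm.injOn.leftInvOn_invFunOn hx⟩
  have hyI : y ∈ Icc (g a) (g b) := Ioo_subset_Icc_self hy
  obtain ⟨hmem, hgy⟩ := hinv y hyI
  have hlo : a < invFunOn g (Icc a b) y :=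
    (hm.lt_iff_lt ⟨le_rfl, hab⟩ hmem).1 (by rw [hgy]; exact hy.1)
  have hhi : invFunOn g (Icc a b) y < b :=
    (hm.lt_iff_lt hmem ⟨hab, le_rfl⟩).1 (by rw [hgy]; exact hy.2)
  exact hmono.continuousAt_of_image_mem_nhds (Icc_mem_nhds hy.1 hy.2)
    (mem_of_superset (Icc_mem_nhds hlo hhi) hsurj)

theorem exists_half_iterate_of_semiconj_mul {f G : ℝ → ℝ} {c lam : ℝ} (h0 : 0 < lam)
    (h1 : lam < 1)
    (hGc : ContinuousOn G (Icc 0 c)) (hGm : StrictMonoOn G (Icc 0 c)) (hG0 : G 0 = 0)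
    (hf : MapsTo f (Icc 0 c) (Icc 0 c)) (hfG : ∀ x ∈ Icc 0 c, G (f x) = lam * G x) :
    ∃ h : ℝ → ℝ, ContinuousOn h (Ioc 0 c) ∧ StrictMonoOn h (Ioc 0 c) ∧
      MapsTo h (Ioc 0 c) (Ioc 0 c) ∧
      ∀ x ∈ Ioc 0 c, h (h x) = f x ∧ f x < h x ∧ h x < x := by
  set q := Real.sqrt lam
  have hq0 : 0 < q := Real.sqrt_pos.2 h0
  have hq1 : q < 1 := by simpa using Real.sqrt_lt_sqrt h0.le h1
  have hqq : q * q = lam := Real.mul_self_sqrt h0.le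
  set h := fun x => invFunOn G (Icc 0 c) (q * G x)
  have hGpos : ∀ x ∈ Ioc 0 c, 0 < G x := fun x hx =>
    hG0 ▸ hGm ⟨le_rfl, hx.1.le.trans hx.2⟩ (Ioc_subset_Icc_self hx) hx.1
  have hmem : ∀ x ∈ Ioc 0 c, q * G x ∈ Ioo (G 0) (G c) := fun x hx =>
    ⟨by rw [hG0]; exact mul_pos hq0 (hGpos x hx),
      (mul_lt_of_lt_one_left (hGpos x hx) hq1).trans_le
        (hGm.monotoneOn (Ioc_subset_Icc_self hx) ⟨hx.1.le.trans hx.2, le_rfl⟩ hx.2)⟩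
  have hh : ∀ x ∈ Ioc 0 c, h x ∈ Ioc 0 c ∧ G (h x) = q * G x := by
    intro x hx
    have hsurj := intermediate_value_Icc (hx.1.le.trans hx.2) hGc
      (Ioo_subset_Icc_self (hmem x hx))
    have hhx : h x ∈ Icc 0 c ∧ G (h x) = q * G x := ⟨invFunOn_mem hsurj, invFunOn_eq hsurj⟩
    refine ⟨⟨?_, hhx.1.2⟩, hhx.2⟩
    exact (hGm.lt_iff_lt ⟨le_rfl, hhx.1.2.trans' hhx.1.1⟩ hhx.1).1 (hhx.2 ▸ (hmem x hx).1)
  have hI : Ioc 0 c ⊆ Icc 0 c := Ioc_subset_Icc_self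
  refine ⟨h, fun x hx => ?_, fun x hx y hy hxy => ?_, fun x hx => (hh x hx).1,
    fun x hx => ⟨?_, ?_, ?_⟩⟩
  · exact ContinuousAt.comp_continuousWithinAt (f := fun x => q * G x)
      (continuousAt_invFunOn_Icc (hx.1.le.trans hx.2) hGc hGm (hmem x hx))
      (continuousWithinAt_const.mul (hGc.mono hI x hx))
  · refine (hGm.lt_iff_lt (hI (hh x hx).1) (hI (hh y hy).1)).1 ?_
    rw [(hh x hx).2, (hh y hy).2]
    exact mul_lt_mul_of_pos_left (hGm (hI hx) (hI hy) hxy) hq0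
  · refine hGm.injOn (hI (hh _ (hh x hx).1).1) (hf (hI hx)) ?_
    rw [(hh _ (hh x hx).1).2, (hh x hx).2, hfG x (hI hx), ← hqq, mul_assoc]
  · refine (hGm.lt_iff_lt (hf (hI hx)) (hI (hh x hx).1)).1 ?_
    rw [hfG x (hI hx), (hh x hx).2, ← hqq, mul_assoc]
    exact mul_lt_of_lt_one_left (mul_pos hq0 (hGpos x hx)) hq1
  · refine (hGm.lt_iff_lt (hI (hh x hx).1) (hI hx)).1 ?_
    rw [(hh x hx).2]
    exact mul_lt_of_lt_one_left (hGpos x hx) hq1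

noncomputable section

namespace LogisticMap

variable {lam x y : ℝ}

def logistic (lam x : ℝ) : ℝ := lam * x * (1 - x)

theorem logistic_zero (lam : ℝ) : logistic lam 0 = 0 := by simp [logistic]

theorem logistic_sub_logistic (lam x y : ℝ) :
    logistic lam y - logistic lam x = lam * (y - x) * (1 - (x + y)) := by
  unfold logistic; ring

theorem mapsTo_logistic (h0 : 0 ≤ lam) (h2 : lam ≤ 2) :
    MapsTo (logistic lam) (Icc 0 (1 / 2)) (Icc 0 (1 / 2)) := by
  rintro x ⟨hx0, hx1⟩
  have hq : x * (1 - x) ≤ 1 / 4 := by nlinarith [sq_nonneg (1 / 2 - x)]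
  constructor <;> unfold logistic <;> nlinarith [mul_nonneg hx0 (by linarith : 0 ≤ 1 - x)]

theorem strictMonoOn_logistic (h0 : 0 < lam) : StrictMonoOn (logistic lam) (Icc 0 (1 / 2)) := by
  intro x _ y hy hxy
  rw [← sub_pos, logistic_sub_logistic]
  exact mul_pos (mul_pos h0 (sub_pos.2 hxy)) (by linarith [hy.2])

def koenigsApprox (lam : ℝ) (n : ℕ) (x : ℝ) : ℝ := (logistic lam)^[n] x / lam ^ n

theorem koenigsApprox_zero_right (lam : ℝ) (n : ℕ) : koenigsApprox lam n 0 = 0 := by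
  simp [koenigsApprox, iterate_fixed (logistic_zero lam)]

theorem koenigsApprox_succ_sub (h0 : lam ≠ 0) (n : ℕ) (x y : ℝ) :
    koenigsApprox lam (n + 1) y - koenigsApprox lam (n + 1) x =
      (koenigsApprox lam n y - koenigsApprox lam n x) *
        (1 - ((logistic lam)^[n] x + (logistic lam)^[n] y)) := by
  simp only [koenigsApprox, iterate_succ_apply', logistic]
  field_simp
  ring

theorem strictMonoOn_koenigsApprox (h0 : 0 < lam) (h2 : lam ≤ 2) (n : ℕ) :
    StrictMonoOn (koenigsApprox lam n) (Icc 0 (1 / 2)) := fun _ hx _ hy hxy =>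
  div_lt_div_of_pos_right
    ((strictMonoOn_logistic h0).iterate (mapsTo_logistic h0.le h2) n hx hy hxy) (pow_pos h0 n)

theorem koenigsApprox_succ_sub_le (h0 : 0 < lam) (h2 : lam ≤ 2) (hx : x ∈ Icc 0 (1 / 2))
    (hy : y ∈ Icc 0 (1 / 2)) (hxy : x ≤ y) (n : ℕ) :
    koenigsApprox lam (n + 1) y - koenigsApprox lam (n + 1) x ≤
      koenigsApprox lam n y - koenigsApprox lam n x := by
  rw [koenigsApprox_succ_sub h0.ne']
  refine mul_le_of_le_one_right ?_ ?_
  · exact sub_nonneg.2 ((strictMonoOn_koenigsApprox h0 h2 n).monotoneOn hx hy hxy)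
  · linarith [((mapsTo_logistic h0.le h2).iterate n hx).1,
      ((mapsTo_logistic h0.le h2).iterate n hy).1]

theorem koenigsApprox_sub_le (h0 : 0 < lam) (h2 : lam ≤ 2) (hx : x ∈ Icc 0 (1 / 2))
    (hy : y ∈ Icc 0 (1 / 2)) (hxy : x ≤ y) (n : ℕ) :
    koenigsApprox lam n y - koenigsApprox lam n x ≤ y - x := by
  simpa [koenigsApprox] using
    antitone_nat_of_succ_le (f := fun n => koenigsApprox lam n y - koenigsApprox lam n x)
      (koenigsApprox_succ_sub_le h0 h2 hx hy hxy) n.zero_le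

theorem antitone_koenigsApprox (h0 : 0 < lam) (h2 : lam ≤ 2) (hx : x ∈ Icc 0 (1 / 2)) :
    Antitone (koenigsApprox lam · x) := by
  refine antitone_nat_of_succ_le fun n => ?_
  simpa [koenigsApprox_zero_right] using
    koenigsApprox_succ_sub_le h0 h2 ⟨le_rfl, by norm_num⟩ hx hx.1 n

theorem iterate_logistic_le (h0 : 0 < lam) (h2 : lam ≤ 2) (hx : x ∈ Icc 0 (1 / 2)) (n : ℕ) :
    (logistic lam)^[n] x ≤ lam ^ n * x := by
  have := koenigsApprox_sub_le h0 h2 ⟨le_rfl, by norm_num⟩ hx hx.1 n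
  rw [koenigsApprox_zero_right, sub_zero, sub_zero, koenigsApprox, div_le_iff₀ (pow_pos h0 n)]
    at this
  linarith

theorem sub_mul_le_koenigsApprox_sub (h0 : 0 < lam) (h2 : lam ≤ 2) (hx : x ∈ Icc 0 (1 / 2))
    (hy : y ∈ Icc 0 (1 / 2)) (hxy : x ≤ y) (n : ℕ) :
    (y - x) * (1 - (x + y) * ∑ k ∈ Finset.range n, lam ^ k) ≤
      koenigsApprox lam n y - koenigsApprox lam n x := by
  induction n with
  | zero => simp [koenigsApprox]
  | succ n ih =>
    set D := koenigsApprox lam n y - koenigsApprox lam n x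
    have hsum : (logistic lam)^[n] x + (logistic lam)^[n] y ≤ lam ^ n * (x + y) := by
      linarith [iterate_logistic_le h0 h2 hx n, iterate_logistic_le h0 h2 hy n]
    have hloss : D * ((logistic lam)^[n] x + (logistic lam)^[n] y) ≤
        (y - x) * (lam ^ n * (x + y)) :=
      mul_le_mul (koenigsApprox_sub_le h0 h2 hx hy hxy n) hsum
        (add_nonneg ((mapsTo_logistic h0.le h2).iterate n hx).1
          ((mapsTo_logistic h0.le h2).iterate n hy).1) (sub_nonneg.2 hxy)
    rw [koenigsApprox_succ_sub h0.ne', Finset.sum_range_succ]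
    linarith

def koenigs (lam x : ℝ) : ℝ := ⨅ n, koenigsApprox lam n x

theorem koenigsApprox_nonneg (h0 : 0 < lam) (h2 : lam ≤ 2) (hx : x ∈ Icc 0 (1 / 2)) (n : ℕ) :
    0 ≤ koenigsApprox lam n x :=
  koenigsApprox_zero_right lam n ▸
    (strictMonoOn_koenigsApprox h0 h2 n).monotoneOn ⟨le_rfl, by norm_num⟩ hx hx.1

theorem bddBelow_koenigsApprox (h0 : 0 < lam) (h2 : lam ≤ 2) (hx : x ∈ Icc 0 (1 / 2)) :
    BddBelow (range (koenigsApprox lam · x)) :=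
  ⟨0, by rintro _ ⟨n, rfl⟩; exact koenigsApprox_nonneg h0 h2 hx n⟩

theorem tendsto_koenigsApprox (h0 : 0 < lam) (h2 : lam ≤ 2) (hx : x ∈ Icc 0 (1 / 2)) :
    Tendsto (koenigsApprox lam · x) atTop (𝓝 (koenigs lam x)) :=
  tendsto_atTop_ciInf (antitone_koenigsApprox h0 h2 hx) (bddBelow_koenigsApprox h0 h2 hx)

theorem koenigs_le_koenigsApprox (h0 : 0 < lam) (h2 : lam ≤ 2) (hx : x ∈ Icc 0 (1 / 2))
    (n : ℕ) : koenigs lam x ≤ koenigsApprox lam n x :=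
  ciInf_le (bddBelow_koenigsApprox h0 h2 hx) n

theorem koenigs_zero (lam : ℝ) : koenigs lam 0 = 0 := by
  simp only [koenigs, koenigsApprox_zero_right, ciInf_const]

theorem koenigs_logistic (h0 : 0 < lam) (h2 : lam ≤ 2) (hx : x ∈ Icc 0 (1 / 2)) :
    koenigs lam (logistic lam x) = lam * koenigs lam x := by
  have hshift :
      ∀ n, lam * koenigsApprox lam (n + 1) x = koenigsApprox lam n (logistic lam x) := by
    intro n
    simp only [koenigsApprox, ← iterate_succ_apply, pow_succ]
    field_simp
  exact tendsto_nhds_unique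
    (tendsto_koenigsApprox h0 h2 (mapsTo_logistic h0.le h2 hx))
    ((((tendsto_koenigsApprox h0 h2 hx).comp (tendsto_add_atTop_nat 1)).const_mul lam).congr
      hshift)

theorem koenigs_iterate_logistic (h0 : 0 < lam) (h2 : lam ≤ 2) (hx : x ∈ Icc 0 (1 / 2))
    (n : ℕ) : koenigs lam ((logistic lam)^[n] x) = lam ^ n * koenigs lam x := by
  induction n with
  | zero => simp
  | succ n ih =>
    rw [iterate_succ_apply', koenigs_logistic h0 h2 ((mapsTo_logistic h0.le h2).iterate n hx), ih,
      pow_succ]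
    ring

theorem sub_mul_le_koenigs_sub (h0 : 0 < lam) (h1 : lam < 1) (hx : x ∈ Icc 0 (1 / 2))
    (hy : y ∈ Icc 0 (1 / 2)) (hxy : x ≤ y) :
    (y - x) * (1 - (x + y) / (1 - lam)) ≤ koenigs lam y - koenigs lam x := by
  have h2 : lam ≤ 2 := by linarith
  refine ge_of_tendsto ((tendsto_koenigsApprox h0 h2 hy).sub (tendsto_koenigsApprox h0 h2 hx))
    (Eventually.of_forall fun n => (sub_mul_le_koenigsApprox_sub h0 h2 hx hy hxy n).trans' ?_)
  have hgeom : ∑ k ∈ Finset.range n, lam ^ k ≤ 1 / (1 - lam) := by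
    have := geom_sum_Ico_le_of_lt_one (m := 0) (n := n) h0.le h1
    rwa [← Finset.range_eq_Ico, pow_zero] at this
  have hloss : (x + y) * ∑ k ∈ Finset.range n, lam ^ k ≤ (x + y) / (1 - lam) := by
    rw [div_eq_mul_one_div]
    exact mul_le_mul_of_nonneg_left hgeom (by linarith [hx.1, hy.1])
  exact mul_le_mul_of_nonneg_left (by linarith) (sub_nonneg.2 hxy)

theorem koenigsApprox_sub_koenigs_le (h0 : 0 < lam) (h1 : lam < 1) (hx : x ∈ Icc 0 (1 / 2))
    (n : ℕ) : koenigsApprox lam n x - koenigs lam x ≤ lam ^ n / (1 - lam) := by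
  have h2 : lam ≤ 2 := by linarith
  have h1' : 0 < 1 - lam := by linarith
  set u := (logistic lam)^[n] x
  have hu : u ∈ Icc 0 (1 / 2) := (mapsTo_logistic h0.le h2).iterate n hx
  have hGu := sub_mul_le_koenigs_sub h0 h1 ⟨le_rfl, by norm_num⟩ hu hu.1
  rw [koenigs_zero, koenigs_iterate_logistic h0 h2 hx, sub_zero, sub_zero, zero_add] at hGu
  have hu_le : u ≤ lam ^ n := by nlinarith [iterate_logistic_le h0 h2 hx n, pow_pos h0 n, hx.2]
  calc koenigsApprox lam n x - koenigs lam x = (u - lam ^ n * koenigs lam x) / lam ^ n := by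
        rw [koenigsApprox]; field_simp; rfl
    _ ≤ (u * u / (1 - lam)) / lam ^ n := by
        gcongr
        have : u * (1 - u / (1 - lam)) = u - u * u / (1 - lam) := by ring
        linarith
    _ ≤ (lam ^ n * lam ^ n / (1 - lam)) / lam ^ n := by
        gcongr
        exact hu.1
    _ = lam ^ n / (1 - lam) := by field_simp

theorem continuousOn_koenigs (h0 : 0 < lam) (h1 : lam < 1) :
    ContinuousOn (koenigs lam) (Icc 0 (1 / 2)) := by
  have h2 : lam ≤ 2 := by linarith
  have hunif : TendstoUniformlyOn (koenigsApprox lam) (koenigs lam) atTop (Icc 0 (1 / 2)) := by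
    rw [Metric.tendstoUniformlyOn_iff]
    intro ε hε
    have hlim : Tendsto (fun n => lam ^ n / (1 - lam)) atTop (𝓝 0) := by
      simpa using (tendsto_pow_atTop_nhds_zero_of_lt_one h0.le h1).div_const (1 - lam)
    filter_upwards [hlim.eventually (gt_mem_nhds hε)] with n hn x hx
    rw [dist_comm, Real.dist_eq, abs_of_nonneg (sub_nonneg.2 (koenigs_le_koenigsApprox h0 h2 hx n))]
    exact (koenigsApprox_sub_koenigs_le h0 h1 hx n).trans_lt hn
  have hcont : Continuous (logistic lam) := by unfold logistic; fun_prop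
  exact hunif.continuousOn
    (Frequently.of_forall fun n => ((hcont.iterate n).div_const _).continuousOn)

theorem strictMonoOn_koenigs (h0 : 0 < lam) (h1 : lam < 1) :
    StrictMonoOn (koenigs lam) (Icc 0 (1 / 2)) := by
  intro x hx y hy hxy
  have h2 : lam ≤ 2 := by linarith
  obtain ⟨N, hN⟩ := exists_pow_lt_of_lt_one (sub_pos.2 h1) h1
  have hmaps := (mapsTo_logistic h0.le h2).iterate N
  have huv := (strictMonoOn_logistic h0).iterate (mapsTo_logistic h0.le h2) N hx hy hxy
  have hsmall : ((logistic lam)^[N] x + (logistic lam)^[N] y) / (1 - lam) < 1 := by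
    rw [div_lt_one (by linarith)]
    nlinarith [iterate_logistic_le h0 h2 hx N, iterate_logistic_le h0 h2 hy N, pow_pos h0 N,
      hx.2, hy.2]
  have hGuv := sub_mul_le_koenigs_sub h0 h1 (hmaps hx) (hmaps hy) huv.le
  rw [koenigs_iterate_logistic h0 h2 hx, koenigs_iterate_logistic h0 h2 hy, ← mul_sub] at hGuv
  have hpos := hGuv.trans_lt' (mul_pos (sub_pos.2 huv) (sub_pos.2 hsmall))
  exact sub_pos.1 (pos_of_mul_pos_right hpos (pow_nonneg h0.le N))

end LogisticMap

end

/-- For `0 < λ < 1` and `f(x) = λ·x·(1−x)`, there is a half-iterate `h` of `f` on `(0, 1/2]`: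
continuous and strictly increasing on `(0,1/2]`, mapping `(0,1/2]` into itself, with
`h(h(x)) = f(x)` and `f(x) < h(x) < x` there; in particular `λ/4 < h(1/2) < 1/2`. -/
theorem logistic_half_iterate (lam : ℝ) (h0 : 0 < lam) (h1 : lam < 1) :
    ∃ h : ℝ → ℝ, ContinuousOn h (Set.Ioc 0 (1 / 2)) ∧ StrictMonoOn h (Set.Ioc 0 (1 / 2)) ∧
      Set.MapsTo h (Set.Ioc 0 (1 / 2)) (Set.Ioc 0 (1 / 2)) ∧
      (∀ x ∈ Set.Ioc (0 : ℝ) (1 / 2),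
        h (h x) = lam * x * (1 - x) ∧ lam * x * (1 - x) < h x ∧ h x < x) ∧
      lam / 4 < h (1 / 2) ∧ h (1 / 2) < 1 / 2 := by
  have h2 : lam ≤ 2 := by linarith
  open LogisticMap in
  obtain ⟨h, hcont, hmono, hmaps, hhalf⟩ := exists_half_iterate_of_semiconj_mul h0 h1
    (continuousOn_koenigs h0 h1) (strictMonoOn_koenigs h0 h1) (koenigs_zero lam)
    (mapsTo_logistic h0.le h2) fun x hx => koenigs_logistic h0 h2 hx
  obtain ⟨-, hlt, hgt⟩ := hhalf (1 / 2) ⟨by norm_num, le_rfl⟩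
  refine ⟨h, hcont, hmono, hmaps, hhalf, ?_, hgt⟩
  rwa [LogisticMap.logistic, show lam * (1 / 2) * (1 - 1 / 2) = lam / 4 by ring] at hlt
end

section
/- Let f(x) = √(1 + x) and let φ = (1 + √5)/2 be the golden ratio. The Koenig limit L = lim_{k→∞} (φ − f^[k](0)) · (2φ)^k exists (as a finite real number) and is strictly positive. -/
open Real Filter

noncomputable def kPhi : ℝ := (1 + Real.sqrt 5) / 2
noncomputable def kX (k : ℕ) : ℝ := (fun t : ℝ => Real.sqrt (1 + t))^[k] 0
noncomputable def kA (k : ℕ) : ℝ := (kPhi - kX k) * (2 * kPhi) ^ k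

lemma sqrt5_gt : (2:ℝ) < Real.sqrt 5 := by
  nlinarith [Real.sq_sqrt (by norm_num : (0:ℝ) ≤ 5), Real.sqrt_nonneg 5]

lemma kPhi_gt : (3:ℝ)/2 < kPhi := by
  have := sqrt5_gt; unfold kPhi; linarith

lemma kPhi_sq : kPhi ^ 2 = kPhi + 1 := by
  have h := Real.sq_sqrt (by norm_num : (0:ℝ) ≤ 5)
  unfold kPhi; linear_combination h / 4

lemma kX_zero : kX 0 = 0 := rfl

lemma kX_succ (k : ℕ) : kX (k+1) = Real.sqrt (1 + kX k) := by
  unfold kX; rw [Function.iterate_succ_apply']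

lemma kX_nonneg (k : ℕ) : 0 ≤ kX k := by
  cases k with
  | zero => simp [kX_zero]
  | succ n => rw [kX_succ]; exact Real.sqrt_nonneg _

lemma kX_le (k : ℕ) : kX k ≤ kPhi := by
  induction k with
  | zero => rw [kX_zero]; linarith [kPhi_gt]
  | succ n ih =>
    rw [kX_succ]
    calc Real.sqrt (1 + kX n) ≤ Real.sqrt (kPhi ^ 2) := by
          apply Real.sqrt_le_sqrt; rw [kPhi_sq]; linarith
      _ = kPhi := Real.sqrt_sq (by linarith [kPhi_gt])

lemma kX_ge_one (k : ℕ) : 1 ≤ kX (k+1) := by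
  rw [kX_succ]
  calc (1:ℝ) = Real.sqrt 1 := Real.sqrt_one.symm
    _ ≤ Real.sqrt (1 + kX k) := Real.sqrt_le_sqrt (by linarith [kX_nonneg k])

lemma kE_rec (k : ℕ) : (kPhi - kX (k+1)) * (kPhi + kX (k+1)) = kPhi - kX k := by
  have hs : kX (k+1) ^ 2 = 1 + kX k := by
    rw [kX_succ]; exact Real.sq_sqrt (by linarith [kX_nonneg k])
  linear_combination kPhi_sq - hs

lemma kE_half (k : ℕ) : kPhi - kX (k+1) ≤ (kPhi - kX k) / 2 := by
  have h := kE_rec k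
  have h1 := kX_ge_one k
  have h2 := kX_le (k+1)
  have h3 := kPhi_gt
  nlinarith [mul_nonneg (sub_nonneg.2 h2) (by linarith : (0:ℝ) ≤ kPhi + kX (k+1) - 2)]

lemma kE_bound (k : ℕ) : kPhi - kX k ≤ kPhi * (1/2) ^ k := by
  induction k with
  | zero => simp [kX_zero]
  | succ n ih =>
    have h := kE_half n
    rw [pow_succ]
    linarith

lemma twoPhi_pos : (0:ℝ) < 2 * kPhi := by linarith [kPhi_gt]

lemma kA_nonneg (k : ℕ) : 0 ≤ kA k :=
  mul_nonneg (sub_nonneg.2 (kX_le k)) (pow_nonneg (le_of_lt twoPhi_pos) k)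

lemma kA_step (k : ℕ) : kA (k+1) = kA k + (2 * kPhi) ^ k * (kPhi - kX (k+1)) ^ 2 := by
  have h := kE_rec k
  unfold kA
  rw [pow_succ]
  linear_combination ((2 * kPhi) ^ k) * h

lemma kA_mono : Monotone kA := by
  apply monotone_nat_of_le_succ
  intro k
  rw [kA_step k]
  nlinarith [mul_nonneg (pow_nonneg (le_of_lt twoPhi_pos) k) (sq_nonneg (kPhi - kX (k+1)))]

lemma kA_bdd (k : ℕ) : kA k ≤ kPhi * Real.exp (kPhi / 2 * (1 - (1/2) ^ k)) := by
  induction k with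
  | zero => simp [kA, kX_zero]
  | succ n ih =>
    have hstep := kA_step n
    have hA0 := kA_nonneg n
    have hphi := kPhi_gt
    -- bound the increment
    have hE1 : kPhi - kX (n+1) ≤ kPhi * (1/2) ^ (n+1) := kE_bound (n+1)
    have hE1' : 0 ≤ kPhi - kX (n+1) := sub_nonneg.2 (kX_le (n+1))
    have hEh : kPhi - kX (n+1) ≤ (kPhi - kX n) / 2 := kE_half n
    -- (2φ)^n * e_{n+1}^2 ≤ kA n * kPhi * (1/2)^(n+2)
    have hinc : (2 * kPhi) ^ n * (kPhi - kX (n+1)) ^ 2 ≤ kA n * (kPhi * (1/2) ^ (n+2)) := by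
      have hp : (0:ℝ) ≤ (2 * kPhi) ^ n := pow_nonneg (le_of_lt twoPhi_pos) n
      have h1 : (2 * kPhi) ^ n * (kPhi - kX (n+1)) ^ 2
          ≤ (2 * kPhi) ^ n * ((kPhi - kX n) / 2 * (kPhi * (1/2) ^ (n+1))) := by
        apply mul_le_mul_of_nonneg_left _ hp
        calc (kPhi - kX (n+1)) ^ 2 = (kPhi - kX (n+1)) * (kPhi - kX (n+1)) := sq (kPhi - kX (n+1)) ▸ sq (kPhi - kX (n+1)) ▸ (sq (kPhi - kX (n+1))).symm ▸ rfl
          _ ≤ (kPhi - kX n) / 2 * (kPhi * (1/2) ^ (n+1)) := by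
              apply mul_le_mul hEh hE1 hE1'
              linarith [sub_nonneg.2 (kX_le n)]
      calc (2 * kPhi) ^ n * (kPhi - kX (n+1)) ^ 2
          ≤ (2 * kPhi) ^ n * ((kPhi - kX n) / 2 * (kPhi * (1/2) ^ (n+1))) := h1
        _ = kA n * (kPhi * (1/2) ^ (n+2)) := by unfold kA; ring
    have hmul : kA (n+1) ≤ kA n * (1 + kPhi * (1/2) ^ (n+2)) := by
      rw [hstep]; nlinarith [hinc]
    have hexp : (1:ℝ) + kPhi * (1/2) ^ (n+2) ≤ Real.exp (kPhi * (1/2) ^ (n+2)) := by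
      have := Real.add_one_le_exp (kPhi * (1/2) ^ (n+2)); linarith
    have hb := ih
    have hposfac : (0:ℝ) ≤ 1 + kPhi * (1/2) ^ (n+2) := by positivity
    calc kA (n+1) ≤ kA n * (1 + kPhi * (1/2) ^ (n+2)) := hmul
      _ ≤ (kPhi * Real.exp (kPhi / 2 * (1 - (1/2) ^ n))) * Real.exp (kPhi * (1/2) ^ (n+2)) := by
          apply mul_le_mul hb hexp hposfac
          positivity
      _ = kPhi * Real.exp (kPhi / 2 * (1 - (1/2) ^ (n+1))) := by
          rw [mul_assoc, ← Real.exp_add]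
          congr 1
          ring

lemma kA_bddAbove : BddAbove (Set.range kA) := by
  refine ⟨kPhi * Real.exp (kPhi / 2), ?_⟩
  rintro _ ⟨k, rfl⟩
  calc kA k ≤ kPhi * Real.exp (kPhi / 2 * (1 - (1/2) ^ k)) := kA_bdd k
    _ ≤ kPhi * Real.exp (kPhi / 2) := by
        apply mul_le_mul_of_nonneg_left _ (by linarith [kPhi_gt])
        apply Real.exp_le_exp.2
        have : (0:ℝ) ≤ (1/2:ℝ) ^ k := by positivity
        nlinarith [kPhi_gt]

/-- For `f(x) = √(1+x)` and `φ = (1+√5)/2`, the Koenig limit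
`L = lim_{k→∞} (φ − f^[k](0))·(2φ)^k` exists and is strictly positive. -/
theorem sqrt_one_add_koenig_limit :
    ∃ L : ℝ, 0 < L ∧
      Filter.Tendsto
        (fun k : ℕ =>
          ((1 + Real.sqrt 5) / 2 - (fun t : ℝ => Real.sqrt (1 + t))^[k] 0) *
            (2 * ((1 + Real.sqrt 5) / 2)) ^ k)
        Filter.atTop (nhds L) := by
  refine ⟨⨆ k, kA k, ?_, ?_⟩
  · have h0 : kA 0 ≤ ⨆ k, kA k := le_ciSup kA_bddAbove 0
    have : kA 0 = kPhi := by simp [kA, kX_zero]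
    linarith [kPhi_gt, this ▸ h0]
  · exact tendsto_atTop_ciSup kA_mono kA_bddAbove
end

section
/- Let f(x) = Γ(1 + x), where Γ is the real Gamma function. For every x with 1 < x < 2, the sequence of iterates k ↦ f^[k](x) is strictly decreasing and converges to 1 as k → ∞. -/
open Real Filter

lemma Gamma_lt_one_of_mem_Ioo {t : ℝ} (h1 : 1 < t) (h2 : t < 2) : Real.Gamma t < 1 := by
  have hconv := Real.convexOn_Gamma
  have hhalf : Real.Gamma (3/2) = Real.sqrt π / 2 := by
    have : (3/2 : ℝ) = 1/2 + 1 := by norm_num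
    rw [this, Real.Gamma_add_one (by norm_num), Real.Gamma_one_half_eq]; ring
  have hlt : Real.Gamma (3/2) < 1 := by
    rw [hhalf]
    rw [div_lt_one (by norm_num)]
    have : Real.sqrt π < Real.sqrt 4 := by
      apply Real.sqrt_lt_sqrt pi_pos.le
      nlinarith [Real.pi_lt_d2]
    simpa [Real.sqrt_eq_iff_eq_sq, show Real.sqrt 4 = 2 by
      rw [show (4:ℝ) = 2^2 by norm_num, Real.sqrt_sq (by norm_num)]] using this
  rcases le_or_gt t (3/2) with hc | hc
  · -- t ∈ (1, 3/2], convex comb of 1 and 3/2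
    have key := hconv.2 (show (1:ℝ) ∈ Set.Ioi 0 by norm_num)
      (show (3/2:ℝ) ∈ Set.Ioi 0 by norm_num)
      (show (0:ℝ) ≤ 3 - 2*t by linarith) (show (0:ℝ) ≤ 2*t - 2 by linarith)
      (show (3 - 2*t) + (2*t - 2) = 1 by ring)
    have ht : (3 - 2*t) • (1:ℝ) + (2*t - 2) • (3/2:ℝ) = t := by simp [smul_eq_mul]; ring
    rw [ht] at key
    calc Real.Gamma t ≤ (3 - 2*t) • Real.Gamma 1 + (2*t - 2) • Real.Gamma (3/2) := key
      _ < (3 - 2*t) * 1 + (2*t - 2) * 1 := by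
          simp only [smul_eq_mul, Real.Gamma_one]
          have : 0 < 2*t - 2 := by linarith
          nlinarith
      _ = 1 := by ring
  · have key := hconv.2 (show (3/2:ℝ) ∈ Set.Ioi 0 by norm_num)
      (show (2:ℝ) ∈ Set.Ioi 0 by norm_num)
      (show (0:ℝ) ≤ 4 - 2*t by linarith) (show (0:ℝ) ≤ 2*t - 3 by linarith)
      (show (4 - 2*t) + (2*t - 3) = 1 by ring)
    have ht : (4 - 2*t) • (3/2:ℝ) + (2*t - 3) • (2:ℝ) = t := by simp [smul_eq_mul]; ring
    rw [ht] at key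
    calc Real.Gamma t ≤ (4 - 2*t) • Real.Gamma (3/2) + (2*t - 3) • Real.Gamma 2 := key
      _ < (4 - 2*t) * 1 + (2*t - 3) * 1 := by
          simp only [smul_eq_mul, Real.Gamma_two]
          have : 0 < 4 - 2*t := by linarith
          nlinarith
      _ = 1 := by ring

lemma step {t : ℝ} (h1 : 1 < t) (h2 : t < 2) :
    1 < Real.Gamma (1 + t) ∧ Real.Gamma (1 + t) < t := by
  constructor
  · have := Real.Gamma_strictMonoOn_Ici (Set.self_mem_Ici)
      (show (1:ℝ) + t ∈ Set.Ici 2 by simp; linarith) (by linarith)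
    simpa [Real.Gamma_two] using this
  · rw [add_comm, Real.Gamma_add_one (by linarith)]
    have := Gamma_lt_one_of_mem_Ioo h1 h2
    nlinarith


/-- For `f(x) = Γ(1+x)` and `1 < x < 2`, the sequence `k ↦ f^[k](x)` is strictly decreasing
and converges to `1`. -/
theorem Gamma_iterates_strictAnti_tendsto_one (x : ℝ) (h1 : 1 < x) (h2 : x < 2) :
    StrictAnti (fun k : ℕ => (fun t : ℝ => Real.Gamma (1 + t))^[k] x) ∧
    Filter.Tendsto (fun k : ℕ => (fun t : ℝ => Real.Gamma (1 + t))^[k] x)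
      Filter.atTop (nhds 1) := by
  set f : ℝ → ℝ := fun t : ℝ => Real.Gamma (1 + t) with hf
  set a : ℕ → ℝ := fun k : ℕ => f^[k] x with ha
  have hmem : ∀ k, 1 < a k ∧ a k < 2 := by
    intro k
    induction k with
    | zero => exact ⟨h1, h2⟩
    | succ n ih =>
      have hs := step ih.1 ih.2
      have : a (n+1) = f (a n) := by
        simp only [ha, Function.iterate_succ_apply']
      rw [this]
      exact ⟨hs.1, lt_trans hs.2 ih.2⟩
  have hsucc : ∀ k, a (k+1) < a k := by
    intro k
    have : a (k+1) = f (a k) := by simp only [ha, Function.iterate_succ_apply']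
    rw [this]
    exact (step (hmem k).1 (hmem k).2).2
  have hanti : StrictAnti a := strictAnti_nat_of_succ_lt hsucc
  refine ⟨hanti, ?_⟩
  have hbdd : BddBelow (Set.range a) := ⟨1, by rintro _ ⟨k, rfl⟩; exact (hmem k).1.le⟩
  have htend : Filter.Tendsto a Filter.atTop (nhds (⨅ k, a k)) :=
    tendsto_atTop_ciInf hanti.antitone hbdd
  set L := ⨅ k, a k with hL
  have hL1 : 1 ≤ L := le_ciInf fun k => (hmem k).1.le
  have hL2 : L < 2 := lt_of_le_of_lt (ciInf_le hbdd 0) h2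
  have hcont : ContinuousAt f L := by
    have hd : DifferentiableAt ℝ Real.Gamma (1 + L) := by
      apply Real.differentiableAt_Gamma
      intro m
      have : (0:ℝ) ≤ m := Nat.cast_nonneg m
      intro h
      have : (-(m:ℝ)) ≤ 0 := by linarith
      linarith [h ▸ this]
    exact hd.continuousAt.comp ((continuous_const.add continuous_id).continuousAt)
  have hfix : f L = L := by
    have h1' : Filter.Tendsto (fun k => a (k+1)) Filter.atTop (nhds L) :=
      htend.comp (Filter.tendsto_add_atTop_nat 1)
    have h2' : Filter.Tendsto (fun k => f (a k)) Filter.atTop (nhds (f L)) :=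
      hcont.tendsto.comp htend
    have heq : (fun k => a (k+1)) = fun k => f (a k) := by
      funext k; simp only [ha, Function.iterate_succ_apply']
    rw [heq] at h1'
    exact tendsto_nhds_unique h2' h1'
  have : L = 1 := by
    by_contra h
    have hL1' : 1 < L := lt_of_le_of_ne hL1 (Ne.symm h)
    exact absurd hfix (ne_of_lt (step hL1' hL2).2)
  rw [this] at htend
  exact htend
end

section
/- Let f(x) = Γ(1 + x), where Γ is the real Gamma function. The sequence w defined by w₀ = 3 and w_{n+1} = f(w_n) (that is, w_n = f^[n](3)) is strictly increasing and tends to +∞ as n → ∞. -/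
lemma gamma_three' : Real.Gamma 3 = 2 := by
  have := Real.Gamma_nat_eq_factorial 2
  norm_num at this
  convert this using 2 <;> norm_num

lemma gamma_key {x : ℝ} (hx : 3 ≤ x) : 2 * x ≤ Real.Gamma (1 + x) := by
  have hx0 : (0:ℝ) < x := by linarith
  have h1 : Real.Gamma (1 + x) = x * Real.Gamma x := by
    rw [add_comm, Real.Gamma_add_one hx0.ne']
  have h2 : (2:ℝ) ≤ Real.Gamma x := by
    rcases eq_or_lt_of_le hx with h | h
    · rw [← h, gamma_three']
    · have := Real.Gamma_strictMonoOn_Ici (by norm_num : (3:ℝ) ∈ Set.Ici 2)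
        (by norm_num [Set.mem_Ici]; linarith : x ∈ Set.Ici 2) h
      rw [gamma_three'] at this
      linarith
  rw [h1]
  nlinarith

/-- For `f(x) = Γ(1+x)`, the orbit `w_n = f^[n](3)` is strictly increasing and tends to `+∞`. -/
theorem Gamma_iterates_from_three_tendsto_atTop :
    StrictMono (fun n : ℕ => (fun t : ℝ => Real.Gamma (1 + t))^[n] 3) ∧
    Filter.Tendsto (fun n : ℕ => (fun t : ℝ => Real.Gamma (1 + t))^[n] 3)
      Filter.atTop Filter.atTop := by
  set f : ℝ → ℝ := fun t => Real.Gamma (1 + t) with hf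
  set w : ℕ → ℝ := fun n => f^[n] 3 with hw
  have hlb : ∀ n, 3 * 2 ^ n ≤ w n := by
    intro n
    induction n with
    | zero => simp [hw]
    | succ n ih =>
      have h3 : (3:ℝ) ≤ w n := by
        have h1 : (1:ℝ) ≤ 2 ^ n := one_le_pow₀ (by norm_num : (1:ℝ) ≤ 2)
        nlinarith
      have : w (n+1) = f (w n) := by
        simp [hw, Function.iterate_succ_apply']
      rw [this]
      have := gamma_key h3
      have h2 : 2 * w n ≥ 2 * (3 * 2 ^ n) := by linarith
      calc (3:ℝ) * 2 ^ (n+1) = 2 * (3 * 2 ^ n) := by ring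
        _ ≤ 2 * w n := h2
        _ ≤ f (w n) := this
  have hstep : ∀ n, w n < w (n + 1) := by
    intro n
    have h3 : (3:ℝ) ≤ w n := by
      have h1 : (1:ℝ) ≤ 2 ^ n := one_le_pow₀ (by norm_num : (1:ℝ) ≤ 2)
      nlinarith [hlb n]
    have : w (n+1) = f (w n) := by simp [hw, Function.iterate_succ_apply']
    rw [this]
    have := gamma_key h3
    have : 2 * w n ≤ f (w n) := this
    linarith
  refine ⟨strictMono_nat_of_lt_succ hstep, ?_⟩
  apply Filter.tendsto_atTop_mono hlb
  have : Filter.Tendsto (fun n : ℕ => (2:ℝ) ^ n) Filter.atTop Filter.atTop :=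
    tendsto_pow_atTop_atTop_of_one_lt (by norm_num)
  exact this.const_mul_atTop (by norm_num)
end
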